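/- arXiv:2601.11112 — 14 statements merged into one kernel-verified Lean document; each statement's English description precedes it below -/
import Mathlib

section
/- Let X be a T0 topological space in which every compact saturated subset is closed. Then X is a T1 space, and consequently every compact subset of X is closed (i.e., X is a KC-space). -/
/-- A subset of a topological space is *saturated* if it equals the intersection of all
open sets containing it. -/
def IsSaturatedSet {Y : Type*} [TopologicalSpace Y] (A : Set Y) : Prop :=
  A = ⋂₀ {U : Set Y | IsOpen U ∧ A ⊆ U}

/-- A space is a *strong R-space* if for every family `𝒦` of compact saturated sets and
every open `U` with `⋂₀ 𝒦 ⊆ U`, some finite subfamily `ℱ ⊆ 𝒦` satisfies `⋂₀ ℱ ⊆ U`. -/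
def IsStrongRSpace (Y : Type*) [TopologicalSpace Y] : Prop :=
  ∀ 𝒦 : Set (Set Y), (∀ K ∈ 𝒦, IsCompact K ∧ IsSaturatedSet K) →
    ∀ U : Set Y, IsOpen U → ⋂₀ 𝒦 ⊆ U → ∃ ℱ ⊆ 𝒦, ℱ.Finite ∧ ⋂₀ ℱ ⊆ U

/-- A space is *coherent* if the intersection of any two compact saturated sets is compact. -/
def IsCoherentSpace (Y : Type*) [TopologicalSpace Y] : Prop :=
  ∀ K₁ K₂ : Set Y, IsCompact K₁ → IsSaturatedSet K₁ → IsCompact K₂ → IsSaturatedSet K₂ →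
    IsCompact (K₁ ∩ K₂)

/-- A space is *well-filtered* if for every (nonempty) filtered family `𝒞` of compact
saturated sets and every open `U` with `⋂₀ 𝒞 ⊆ U`, there exists `K ∈ 𝒞` with `K ⊆ U`. -/
def IsWellFilteredSpace (Y : Type*) [TopologicalSpace Y] : Prop :=
  ∀ 𝒞 : Set (Set Y), 𝒞.Nonempty → (∀ K ∈ 𝒞, IsCompact K ∧ IsSaturatedSet K) →
    (∀ A ∈ 𝒞, ∀ B ∈ 𝒞, ∃ C ∈ 𝒞, C ⊆ A ∩ B) →
    ∀ U : Set Y, IsOpen U → ⋂₀ 𝒞 ⊆ U → ∃ K ∈ 𝒞, K ⊆ U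

/-- Upper closure of a set with respect to the specialization order
(`a ≤ y` iff `a ∈ closure {y}`). -/
def specUpperClosure {Y : Type*} [TopologicalSpace Y] (A : Set Y) : Set Y :=
  {y | ∃ a ∈ A, a ∈ closure {y}}

/-- A space is an *R-space* if whenever an intersection of upper closures of finite sets
is contained in an open set `U`, a finite subintersection is already contained in `U`. -/
def IsRSpace (Y : Type*) [TopologicalSpace Y] : Prop :=
  ∀ (ι : Type*) (F : ι → Set Y), (∀ i, (F i).Finite) → ∀ U : Set Y, IsOpen U →
    (⋂ i, specUpperClosure (F i)) ⊆ U →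
    ∃ A : Set ι, A.Finite ∧ (⋂ i ∈ A, specUpperClosure (F i)) ⊆ U

/-- The Smyth powerspace: the set of nonempty compact saturated subsets. -/
def SmythPow (Y : Type*) [TopologicalSpace Y] : Type _ :=
  {K : Set Y // K.Nonempty ∧ IsCompact K ∧ IsSaturatedSet K}

/-- The topology of the Smyth powerspace, generated by `□U = {K | K ⊆ U}` for `U` open. -/
instance SmythPow.instTopologicalSpace {Y : Type*} [TopologicalSpace Y] :
    TopologicalSpace (SmythPow Y) :=
  TopologicalSpace.generateFrom
    {S | ∃ U : Set Y, IsOpen U ∧ S = {K : SmythPow Y | K.1 ⊆ U}}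

/-- A space is *co-Noetherian* if every closed set is the closure of a finite set. -/
def IsCoNoetherian (Y : Type*) [TopologicalSpace Y] : Prop :=
  ∀ C : Set Y, IsClosed C → ∃ F : Set Y, F.Finite ∧ C = closure F

/-- The patch topology: generated by the open sets together with complements of
compact saturated sets. -/
def patchTop (Y : Type*) [TopologicalSpace Y] : TopologicalSpace Y :=
  TopologicalSpace.generateFrom
    ({U : Set Y | IsOpen U} ∪ {S : Set Y | ∃ K : Set Y, IsCompact K ∧ IsSaturatedSet K ∧ S = Kᶜ})

/-- The strong (Skula) topology: generated by the open sets together with the closed sets. -/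
def skulaTop (Y : Type*) [TopologicalSpace Y] : TopologicalSpace Y :=
  TopologicalSpace.generateFrom ({U : Set Y | IsOpen U} ∪ {C : Set Y | IsClosed C})

/-- A space is *locally hypercompact* if every point has, inside each open neighbourhood `U`,
a finite set `F ⊆ U` with the point in the interior of the upper closure of `F`. -/
def IsLocallyHypercompact (Y : Type*) [TopologicalSpace Y] : Prop :=
  ∀ x : Y, ∀ U : Set Y, IsOpen U → x ∈ U →
    ∃ F : Set Y, F.Finite ∧ F ⊆ U ∧ x ∈ interior (specUpperClosure F)

/-- `U ≪ V` for open sets: every open cover of `V` has a finite subfamily covering `U`. -/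
def wayBelowOpen {Y : Type*} [TopologicalSpace Y] (U V : Set Y) : Prop :=
  ∀ 𝒞 : Set (Set Y), (∀ W ∈ 𝒞, IsOpen W) → V ⊆ ⋃₀ 𝒞 → ∃ 𝒟 ⊆ 𝒞, 𝒟.Finite ∧ U ⊆ ⋃₀ 𝒟

/-- A space is *open well-filtered* if for every (nonempty) `≪`-filtered family `ℱ` of open
sets and every open `U` with `⋂₀ ℱ ⊆ U`, there is `V ∈ ℱ` with `V ⊆ U`. -/
def IsOpenWellFiltered (Y : Type*) [TopologicalSpace Y] : Prop :=
  ∀ ℱ : Set (Set Y), ℱ.Nonempty → (∀ W ∈ ℱ, IsOpen W) →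
    (∀ U₁ ∈ ℱ, ∀ U₂ ∈ ℱ, ∃ U₃ ∈ ℱ, wayBelowOpen U₃ U₁ ∧ wayBelowOpen U₃ U₂) →
    ∀ U : Set Y, IsOpen U → ⋂₀ ℱ ⊆ U → ∃ V ∈ ℱ, V ⊆ U

/-- Lower closure of a set in a preorder. -/
def lowerCloSet {L : Type*} [Preorder L] (A : Set L) : Set L := {x | ∃ a ∈ A, x ≤ a}

/-- `F` is a *cover* of the antichain `C`: `F` is a finite antichain with `C ⊆ ↓F`, and
for every finite `G` with `C ⊆ ↓G` one has `F ⊆ ↓G`. -/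
def IsCoverOf {L : Type*} [Preorder L] (F C : Set L) : Prop :=
  F.Finite ∧ IsAntichain (· ≤ ·) F ∧ C ⊆ lowerCloSet F ∧
    ∀ G : Set L, G.Finite → C ⊆ lowerCloSet G → F ⊆ lowerCloSet G

/-- Specialization order: `x ≤ y` iff `x ∈ closure {y}`. -/
def specLE {Y : Type*} [TopologicalSpace Y] (x y : Y) : Prop := x ∈ closure {y}

/-- Lower closure with respect to the specialization order. -/
def specLowerClosure {Y : Type*} [TopologicalSpace Y] (A : Set Y) : Set Y :=
  {x | ∃ a ∈ A, specLE x a}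

theorem stmt0 {X : Type*} [TopologicalSpace X] [T0Space X]
    (h : ∀ K : Set X, IsCompact K → IsSaturatedSet K → IsClosed K) :
    T1Space X ∧ ∀ K : Set X, IsCompact K → IsClosed K := by
  classical
  -- saturation of a point
  set S : X → Set X := fun x => ⋂₀ {U : Set X | IsOpen U ∧ x ∈ U} with hS
  have hmem : ∀ x y : X, y ∈ S x ↔ x ∈ closure ({y} : Set X) := by
    intro x y
    rw [mem_closure_iff]
    constructor
    · intro hy U hU hxU
      exact ⟨y, hy U ⟨hU, hxU⟩, rfl⟩
    · intro h' U hU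
      rcases h' U hU.1 hU.2 with ⟨z, hz, hz'⟩
      rcases hz' with rfl
      exact hz
  have hxS : ∀ x : X, x ∈ S x := fun x U hU => hU.2
  have hcomp : ∀ x : X, IsCompact (S x) := by
    intro x
    apply isCompact_of_finite_subcover
    intro ι U hU hcov
    rcases Set.mem_iUnion.mp (hcov (hxS x)) with ⟨i, hi⟩
    refine ⟨{i}, ?_⟩
    intro y hy
    exact Set.mem_iUnion₂.mpr ⟨i, Finset.mem_singleton_self i, hy (U i) ⟨hU i, hi⟩⟩
  have hsat : ∀ x : X, IsSaturatedSet (S x) := by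
    intro x
    apply Set.Subset.antisymm
    · intro y hy V hV
      exact hy V ⟨hV.1, hV.2 (hxS x)⟩
    · intro y hy U hU
      exact hy U ⟨hU.1, fun z hz => hz U hU⟩
  have hclosed : ∀ x : X, IsClosed (S x) := fun x => h _ (hcomp x) (hsat x)
  have ht1 : T1Space X := by
    constructor
    intro x
    have : closure ({x} : Set X) = {x} := by
      apply Set.Subset.antisymm
      · intro y hy
        have h1 : y ∈ S x := (hclosed x).closure_subset_iff.mpr
          (Set.singleton_subset_iff.mpr (hxS x)) hy
        have h2 : x ∈ closure ({y} : Set X) := (hmem x y).mp h1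
        have : Inseparable x y :=
          ((specializes_iff_mem_closure.mpr h2).antisymm (specializes_iff_mem_closure.mpr hy)).symm
        exact (this.eq).symm ▸ Set.mem_singleton y
      · exact subset_closure
    exact closure_eq_iff_isClosed.mp this
  refine ⟨ht1, fun K hK => ?_⟩
  apply h K hK
  apply Set.Subset.antisymm
  · intro y hy U hU
    exact hU.2 hy
  · intro y hy
    by_contra hyK
    exact hy ({y}ᶜ) ⟨isOpen_compl_singleton, fun z hz hz' => hyK (hz' ▸ hz)⟩ rfl
end

section
/- Every KC-space is a strong R-space. -/
theorem stmt1 {X : Type*} [TopologicalSpace X]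
    (h : ∀ K : Set X, IsCompact K → IsClosed K) : IsStrongRSpace X := by
  intro 𝒦 h𝒦 U hU hsub
  rcases 𝒦.eq_empty_or_nonempty with rfl | ⟨K₀, hK₀⟩
  · exact ⟨∅, Set.empty_subset _, Set.finite_empty, by simpa using hsub⟩
  · have hK₀cpt : IsCompact K₀ := (h𝒦 K₀ hK₀).1
    have hcpt : IsCompact (K₀ \ U) := hK₀cpt.diff hU
    have hcov : K₀ \ U ⊆ ⋃ K ∈ 𝒦, Kᶜ := by
      intro x hx
      by_contra hc
      simp only [Set.mem_iUnion, Set.mem_compl_iff, not_exists, not_not] at hc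
      exact hx.2 (hsub fun K hK => hc K hK)
    obtain ⟨F, hF𝒦, hFfin, hFcov⟩ := hcpt.elim_finite_subcover_image
      (fun K hK => (h K (h𝒦 K hK).1).isOpen_compl) hcov
    refine ⟨insert K₀ F, Set.insert_subset hK₀ hF𝒦, hFfin.insert K₀, ?_⟩
    intro x hx
    by_contra hxU
    have hxK₀ : x ∈ K₀ := hx K₀ (Set.mem_insert _ _)
    obtain ⟨K, hKF, hxK⟩ := by simpa using hFcov ⟨hxK₀, hxU⟩
    exact hxK (hx K (Set.mem_insert_of_mem _ hKF))
end

section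
/- Let X be a T1, coherent, well-filtered topological space. If X is locally compact, then X is a KC-space. -/
theorem stmt2 {X : Type*} [TopologicalSpace X] [T1Space X] [LocallyCompactSpace X]
    (hcoh : IsCoherentSpace X) (hwf : IsWellFilteredSpace X) :
    ∀ K : Set X, IsCompact K → IsClosed K := by
  have hsat : ∀ A : Set X, IsSaturatedSet A := by
    intro A
    apply subset_antisymm
    · intro a ha U hU; exact hU.2 ha
    · intro y hy
      by_contra hyA
      have : y ∈ {y}ᶜ := hy ({y}ᶜ) ⟨isOpen_compl_singleton, fun a ha hay => hyA (hay ▸ ha)⟩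
      exact this rfl
  intro K hK
  rw [← isOpen_compl_iff]
  rw [isOpen_iff_mem_nhds]
  intro x hx
  set 𝒞 : Set (Set X) := {S | ∃ Q : Set X, Q ∈ nhds x ∧ IsCompact Q ∧ S = Q ∩ K} with h𝒞
  have hmem : ∀ S ∈ 𝒞, IsCompact S ∧ IsSaturatedSet S := by
    rintro S ⟨Q, _, hQc, rfl⟩
    exact ⟨hcoh Q K hQc (hsat Q) hK (hsat K), hsat _⟩
  have hne : 𝒞.Nonempty := by
    obtain ⟨Q, hQn, -, hQc⟩ := local_compact_nhds (x := x) (n := Set.univ) Filter.univ_mem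
    exact ⟨Q ∩ K, Q, hQn, hQc, rfl⟩
  have hfil : ∀ A ∈ 𝒞, ∀ B ∈ 𝒞, ∃ C ∈ 𝒞, C ⊆ A ∩ B := by
    rintro A ⟨Q₁, hQ₁n, hQ₁c, rfl⟩ B ⟨Q₂, hQ₂n, hQ₂c, rfl⟩
    refine ⟨(Q₁ ∩ Q₂) ∩ K, ⟨Q₁ ∩ Q₂, Filter.inter_mem hQ₁n hQ₂n,
      hcoh Q₁ Q₂ hQ₁c (hsat _) hQ₂c (hsat _), rfl⟩, ?_⟩
    intro z hz
    exact ⟨⟨hz.1.1, hz.2⟩, hz.1.2, hz.2⟩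
  have hempty : ⋂₀ 𝒞 ⊆ (∅ : Set X) := by
    intro y hy
    by_cases hyx : y = x
    · subst hyx
      obtain ⟨Q, hQn, -, hQc⟩ := local_compact_nhds (x := y) (n := Set.univ) Filter.univ_mem
      exact absurd (hy _ ⟨Q, hQn, hQc, rfl⟩).2 hx
    · obtain ⟨Q, hQn, hQs, hQc⟩ := local_compact_nhds (x := x) (n := {y}ᶜ)
        (isOpen_compl_singleton.mem_nhds (by simpa using Ne.symm hyx))
      exact hQs (hy _ ⟨Q, hQn, hQc, rfl⟩).1 rfl
  obtain ⟨S, ⟨Q, hQn, hQc, rfl⟩, hSU⟩ := hwf 𝒞 hne hmem hfil ∅ isOpen_empty hempty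
  have : Q ⊆ Kᶜ := fun z hz hzK => hSU ⟨hz, hzK⟩
  exact Filter.mem_of_superset hQn this
end

section
/- Let X be a T0 topological space. If X is coherent and well-filtered, then X is a strong R-space. -/
lemma isSaturatedSet_iff_upper {Y : Type*} [TopologicalSpace Y] (A : Set Y) :
    IsSaturatedSet A ↔ ∀ x ∈ A, ∀ y, x ∈ closure {y} → y ∈ A := by
  constructor
  · intro h x hx y hxy
    have hx' : x ∈ ⋂₀ {U : Set Y | IsOpen U ∧ A ⊆ U} := h ▸ hx
    rw [h]
    intro U hU
    have hxU : x ∈ U := Set.mem_sInter.mp hx' U hU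
    rcases mem_closure_iff.mp hxy U hU.1 hxU with ⟨z, hz1, hz2⟩
    exact hz2 ▸ hz1
  · intro h
    apply Set.Subset.antisymm
    · intro x hx U hU; exact hU.2 hx
    · intro x hx
      by_contra hxA
      have : x ∈ (closure {x})ᶜ := by
        apply hx
        refine ⟨isClosed_closure.isOpen_compl, ?_⟩
        intro a ha hac
        exact hxA (h a ha x hac)
      exact this (subset_closure rfl)

lemma isSaturatedSet_inter {Y : Type*} [TopologicalSpace Y] {A B : Set Y}
    (hA : IsSaturatedSet A) (hB : IsSaturatedSet B) : IsSaturatedSet (A ∩ B) := by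
  rw [isSaturatedSet_iff_upper] at *
  intro x hx y hxy
  exact ⟨hA x hx.1 y hxy, hB x hx.2 y hxy⟩

theorem stmt3 {X : Type*} [TopologicalSpace X] [T0Space X]
    (hcoh : IsCoherentSpace X) (hwf : IsWellFilteredSpace X) : IsStrongRSpace X := by
  intro 𝒦 h𝒦 U hU hsub
  rcases 𝒦.eq_empty_or_nonempty with rfl | ⟨K₀, hK₀⟩
  · exact ⟨∅, Set.Subset.rfl, Set.finite_empty, by simpa using hsub⟩
  -- finite intersections of members of 𝒦 are compact and saturated
  have key : ∀ ℱ : Set (Set X), ℱ.Finite → ℱ.Nonempty → ℱ ⊆ 𝒦 →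
      IsCompact (⋂₀ ℱ) ∧ IsSaturatedSet (⋂₀ ℱ) := by
    intro ℱ hfin
    refine Set.Finite.induction_on (motive := fun ℱ _ => ℱ.Nonempty → ℱ ⊆ 𝒦 →
      IsCompact (⋂₀ ℱ) ∧ IsSaturatedSet (⋂₀ ℱ)) ℱ hfin
      (fun h _ => absurd rfl h.ne_empty) ?_
    clear hfin
    intro K ℱ hK hFfin IH _ hsub'
    have hKmem := h𝒦 K (hsub' (Set.mem_insert _ _))
    rcases ℱ.eq_empty_or_nonempty with rfl | hne
    · simpa using hKmem
    · have hIH := IH hne (fun S hS => hsub' (Set.mem_insert_of_mem _ hS))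
      rw [Set.sInter_insert]
      exact ⟨hcoh K (⋂₀ ℱ) hKmem.1 hKmem.2 hIH.1 hIH.2,
        isSaturatedSet_inter hKmem.2 hIH.2⟩
  set 𝒞 : Set (Set X) :=
    {S | ∃ ℱ : Set (Set X), ℱ ⊆ 𝒦 ∧ ℱ.Finite ∧ ℱ.Nonempty ∧ S = ⋂₀ ℱ} with h𝒞
  have hCne : 𝒞.Nonempty := ⟨K₀, {K₀}, by simpa using hK₀, Set.finite_singleton _,
    Set.singleton_nonempty _, by simp⟩
  have hCcs : ∀ S ∈ 𝒞, IsCompact S ∧ IsSaturatedSet S := by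
    rintro S ⟨ℱ, hs, hf, hn, rfl⟩
    exact key ℱ hf hn hs
  have hCfilt : ∀ A ∈ 𝒞, ∀ B ∈ 𝒞, ∃ C ∈ 𝒞, C ⊆ A ∩ B := by
    rintro A ⟨ℱ₁, hs₁, hf₁, hn₁, rfl⟩ B ⟨ℱ₂, hs₂, hf₂, hn₂, rfl⟩
    refine ⟨⋂₀ (ℱ₁ ∪ ℱ₂), ⟨ℱ₁ ∪ ℱ₂, Set.union_subset hs₁ hs₂, hf₁.union hf₂,
      hn₁.mono Set.subset_union_left, rfl⟩, ?_⟩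
    rw [Set.sInter_union]
  have hCsub : ⋂₀ 𝒞 ⊆ U := by
    refine Set.Subset.trans ?_ hsub
    intro x hx K hK
    have : ⋂₀ {K} ∈ 𝒞 := ⟨{K}, by simpa using hK, Set.finite_singleton _,
      Set.singleton_nonempty _, rfl⟩
    simpa using hx _ this
  rcases hwf 𝒞 hCne hCcs hCfilt U hU hCsub with ⟨S, hS, hSU⟩
  rcases hS with ⟨ℱ, hs, hf, _, rfl⟩
  exact ⟨ℱ, hs, hf, hSU⟩
end

section
/- Let X be a locally compact, coherent, well-filtered T0 topological space. Then the Smyth powerspace P_S(X) is a strong R-space. -/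
section StrongRAux

open Set TopologicalSpace

variable {Y : Type*} [TopologicalSpace Y]

/-- Saturation of a set: intersection of all open supersets. -/
def satOf (A : Set Y) : Set Y := ⋂₀ {U : Set Y | IsOpen U ∧ A ⊆ U}

lemma subset_satOf (A : Set Y) : A ⊆ satOf A :=
  fun x hx => Set.mem_sInter.mpr fun _ hU => hU.2 hx

lemma satOf_subset {A U : Set Y} (hU : IsOpen U) (h : A ⊆ U) : satOf A ⊆ U :=
  fun _ hx => Set.mem_sInter.mp hx U ⟨hU, h⟩

lemma satOf_mono {A B : Set Y} (h : A ⊆ B) : satOf A ⊆ satOf B := by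
  intro x hx
  exact Set.mem_sInter.mpr fun U hU => Set.mem_sInter.mp hx U ⟨hU.1, h.trans hU.2⟩

lemma IsSaturatedSet.satOf_eq {A : Set Y} (h : IsSaturatedSet A) : satOf A = A := h.symm

lemma isSaturatedSet_satOf (A : Set Y) : IsSaturatedSet (satOf A) := by
  apply Set.Subset.antisymm (subset_satOf _)
  intro x hx
  exact Set.mem_sInter.mpr fun U hU =>
    Set.mem_sInter.mp hx U ⟨hU.1, satOf_subset hU.1 hU.2⟩

lemma IsSaturatedSet.mem {A : Set Y} (h : IsSaturatedSet A) {x : Y}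
    (hx : ∀ U, IsOpen U → A ⊆ U → x ∈ U) : x ∈ A := by
  rw [h]
  exact Set.mem_sInter.mpr fun U hU => hx U hU.1 hU.2

lemma IsSaturatedSet.exists_open_not_mem {A : Set Y} (h : IsSaturatedSet A) {x : Y}
    (hx : x ∉ A) : ∃ U, IsOpen U ∧ A ⊆ U ∧ x ∉ U := by
  by_contra hc
  push_neg at hc
  exact hx (h.mem hc)

lemma IsSaturatedSet.inter {A B : Set Y} (hA : IsSaturatedSet A) (hB : IsSaturatedSet B) :
    IsSaturatedSet (A ∩ B) := by
  apply Set.Subset.antisymm (subset_satOf _)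
  intro x hx
  constructor
  · rw [← hA.satOf_eq]; exact satOf_mono Set.inter_subset_left hx
  · rw [← hB.satOf_eq]; exact satOf_mono Set.inter_subset_right hx

lemma IsCompact.satOf {K : Set Y} (hK : IsCompact K) : IsCompact (satOf K) := by
  apply isCompact_of_finite_subcover
  intro ι U hU hcov
  obtain ⟨t, ht⟩ := hK.elim_finite_subcover U hU ((subset_satOf K).trans hcov)
  exact ⟨t, satOf_subset (isOpen_biUnion fun i _ => hU i) ht⟩

/-- A finite nonempty subset of a `⊆`-chain has a least element. -/
lemma exists_least_of_chain {α : Type*} {c s : Set (Set α)} (hc : IsChain (· ⊆ ·) c)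
    (hsc : s ⊆ c) (hf : s.Finite) (hn : s.Nonempty) : ∃ m ∈ s, ∀ a ∈ s, m ⊆ a := by
  obtain ⟨m, hm, hmin⟩ := hf.exists_minimal hn
  refine ⟨m, hm, fun a ha => ?_⟩
  rcases eq_or_ne a m with rfl | hne
  · exact Set.Subset.rfl
  · rcases hc (hsc ha) (hsc hm) hne with h | h
    · exact hmin ha h
    · exact h

/-- A finite nonempty subset of a `⊆`-chain has a greatest element. -/
lemma exists_greatest_of_chain {α : Type*} {c s : Set (Set α)} (hc : IsChain (· ⊆ ·) c)
    (hsc : s ⊆ c) (hf : s.Finite) (hn : s.Nonempty) : ∃ m ∈ s, ∀ a ∈ s, a ⊆ m := by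
  obtain ⟨m, hm, hmax⟩ := hf.exists_maximal hn
  refine ⟨m, hm, fun a ha => ?_⟩
  rcases eq_or_ne a m with rfl | hne
  · exact Set.Subset.rfl
  · rcases hc (hsc ha) (hsc hm) hne with h | h
    · exact h
    · exact hmax ha h

/-- A sober space (in the existence sense) is well-filtered. -/
lemma wellFiltered_of_sober
    (hsob : ∀ A : Set Y, IsIrreducible A → IsClosed A → ∃ y, closure {y} = A) :
    IsWellFilteredSpace Y := by
  intro 𝒞 hne hcs hfil U hU hsub
  by_contra hcon
  push_neg at hcon
  -- every K ∈ 𝒞 meets Uᶜ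
  have hmeet : ∀ K ∈ 𝒞, (K ∩ Uᶜ).Nonempty := by
    intro K hK
    obtain ⟨x, hxK, hxU⟩ := Set.not_subset.mp (hcon K hK)
    exact ⟨x, hxK, hxU⟩
  set S : Set (Set Y) := {C | IsClosed C ∧ C ⊆ Uᶜ ∧ ∀ K ∈ 𝒞, (K ∩ C).Nonempty} with hS
  have hUc : Uᶜ ∈ S := ⟨hU.isClosed_compl, Set.Subset.rfl, hmeet⟩
  have hzorn : ∀ c ⊆ S, IsChain (· ⊆ ·) c → c.Nonempty → ∃ lb ∈ S, ∀ s ∈ c, lb ⊆ s := by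
    intro c hcS hchain hcne
    refine ⟨⋂₀ c, ⟨isClosed_sInter fun C hC => (hcS hC).1, ?_, ?_⟩,
      fun s hs => Set.sInter_subset_of_mem hs⟩
    · obtain ⟨C₀, hC₀⟩ := hcne
      exact (Set.sInter_subset_of_mem hC₀).trans (hcS hC₀).2.1
    · intro K hK
      by_contra hKe
      rw [Set.not_nonempty_iff_eq_empty] at hKe
      have hcov : K ⊆ ⋃ C : c, (C : Set Y)ᶜ := by
        intro x hxK
        by_contra hx
        simp only [Set.mem_iUnion, Set.mem_compl_iff, not_exists, not_not] at hx
        exact Set.eq_empty_iff_forall_notMem.mp hKe x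
          ⟨hxK, Set.mem_sInter.mpr fun C hC => hx ⟨C, hC⟩⟩
      obtain ⟨t, ht⟩ := (hcs K hK).1.elim_finite_subcover (fun C : c => (C : Set Y)ᶜ)
        (fun C => ((hcS C.2).1).isOpen_compl) hcov
      rcases t.eq_empty_or_nonempty with rfl | htne
      · simp only [Finset.notMem_empty, Set.iUnion_of_empty, Set.iUnion_empty] at ht
        obtain ⟨C₀, hC₀⟩ := hcne
        obtain ⟨k, hk, -⟩ := (hcS hC₀).2.2 K hK
        exact ht hk
      · have hsub' : (Subtype.val '' (↑t : Set c)) ⊆ c := by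
          rintro C ⟨C', -, rfl⟩; exact C'.2
        obtain ⟨Cm, hCm, hCmin⟩ := exists_least_of_chain hchain hsub'
          ((t.finite_toSet).image _) (htne.to_set.image _)
        obtain ⟨z, hzK, hzCm⟩ := (hcS (hsub' hCm)).2.2 K hK
        have hzmem : z ∈ ⋃ i ∈ t, ((i : Set Y))ᶜ := ht hzK
        simp only [Set.mem_iUnion] at hzmem
        obtain ⟨C, hCt, hzC⟩ := hzmem
        exact hzC (hCmin C ⟨C, hCt, rfl⟩ hzCm)
  obtain ⟨m, hmUc, hmmin⟩ := zorn_superset_nonempty S hzorn Uᶜ hUc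
  · -- m is irreducible closed
    have hmS : m ∈ S := hmmin.1
    obtain ⟨K₀, hK₀⟩ := hne
    have hmne : m.Nonempty := by
      obtain ⟨k, -, hkm⟩ := hmS.2.2 K₀ hK₀
      exact ⟨k, hkm⟩
    have hirr : IsIrreducible m := by
      refine ⟨hmne, fun u v hu hv hmu hmv => ?_⟩
      by_contra hcc
      rw [Set.not_nonempty_iff_eq_empty] at hcc
      have key : (m ∩ uᶜ) ∈ S ∨ (m ∩ vᶜ) ∈ S := by
        by_contra hkey
        push_neg at hkey
        have h1 : ∃ K₁ ∈ 𝒞, K₁ ∩ (m ∩ uᶜ) = ∅ := by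
          by_contra h'
          push_neg at h'
          exact hkey.1 ⟨hmS.1.inter (hu.isClosed_compl),
            (Set.inter_subset_left).trans hmS.2.1,
            fun K hK => h' K hK⟩
        have h2 : ∃ K₂ ∈ 𝒞, K₂ ∩ (m ∩ vᶜ) = ∅ := by
          by_contra h'
          push_neg at h'
          exact hkey.2 ⟨hmS.1.inter (hv.isClosed_compl),
            (Set.inter_subset_left).trans hmS.2.1,
            fun K hK => h' K hK⟩
        obtain ⟨K₁, hK₁, hK₁e⟩ := h1
        obtain ⟨K₂, hK₂, hK₂e⟩ := h2
        obtain ⟨K₃, hK₃, hK₃sub⟩ := hfil K₁ hK₁ K₂ hK₂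
        obtain ⟨z, hzK₃, hzm⟩ := hmS.2.2 K₃ hK₃
        have hzuv : z ∉ u ∩ v := fun h => Set.eq_empty_iff_forall_notMem.mp hcc z ⟨hzm, h⟩
        rcases not_and_or.mp hzuv with hz | hz
        · exact Set.eq_empty_iff_forall_notMem.mp hK₁e z ⟨(hK₃sub hzK₃).1, hzm, hz⟩
        · exact Set.eq_empty_iff_forall_notMem.mp hK₂e z ⟨(hK₃sub hzK₃).2, hzm, hz⟩
      rcases key with hk | hk
      · have hsub' : m ⊆ m ∩ uᶜ := hmmin.2 hk Set.inter_subset_left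
        obtain ⟨z, hzm, hzu⟩ := hmu
        exact (hsub' hzm).2 hzu
      · have hsub' : m ⊆ m ∩ vᶜ := hmmin.2 hk Set.inter_subset_left
        obtain ⟨z, hzm, hzv⟩ := hmv
        exact (hsub' hzm).2 hzv
    obtain ⟨x, hx⟩ := hsob m hirr hmS.1
    have hxall : ∀ K ∈ 𝒞, x ∈ K := by
      intro K hK
      obtain ⟨k, hkK, hkm⟩ := hmS.2.2 K hK
      have hkcl : k ∈ closure ({x} : Set Y) := hx ▸ hkm
      refine (hcs K hK).2.mem fun V hV hKV => ?_
      obtain ⟨_, hxV, hxx⟩ := mem_closure_iff.mp hkcl V hV (hKV hkK)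
      exact hxx ▸ hxV
    have hxU : x ∈ U := hsub (Set.mem_sInter.mpr fun K hK => hxall K hK)
    have hxm : x ∈ m := hx ▸ subset_closure rfl
    exact hmS.2.1 hxm hxU

end StrongRAux

section HM
open Set TopologicalSpace
variable {Y : Type*} [TopologicalSpace Y]

/-- Hofmann–Mislove: in a sober space, a Scott-open filter of open sets contains every
open set containing its intersection. -/
lemma hofmann_mislove
    (hsob : ∀ A : Set Y, IsIrreducible A → IsClosed A → ∃ y, closure {y} = A)
    (Φ : Set (Set Y))
    (hop : ∀ V ∈ Φ, IsOpen V)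
    (huniv : Set.univ ∈ Φ)
    (hup : ∀ V ∈ Φ, ∀ W : Set Y, IsOpen W → V ⊆ W → W ∈ Φ)
    (hbin : ∀ V ∈ Φ, ∀ W ∈ Φ, V ∩ W ∈ Φ)
    (hScott : ∀ V ∈ Φ, ∀ 𝒱 : Set (Set Y), (∀ W ∈ 𝒱, IsOpen W) → V ⊆ ⋃₀ 𝒱 →
      ∃ 𝒱' ⊆ 𝒱, 𝒱'.Finite ∧ ⋃₀ 𝒱' ∈ Φ) :
    ∀ U : Set Y, IsOpen U → ⋂₀ Φ ⊆ U → U ∈ Φ := by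
  intro U hUopen hUsub
  by_contra hUΦ
  set S : Set (Set Y) := {W | IsOpen W ∧ U ⊆ W ∧ W ∉ Φ} with hSdef
  have hUS : U ∈ S := ⟨hUopen, Set.Subset.rfl, hUΦ⟩
  have hzorn : ∀ c ⊆ S, IsChain (· ⊆ ·) c → c.Nonempty → ∃ ub ∈ S, ∀ s ∈ c, s ⊆ ub := by
    intro c hcS hchain hcne
    have hopen : IsOpen (⋃₀ c) := isOpen_sUnion fun W hW => (hcS hW).1
    refine ⟨⋃₀ c, ⟨hopen, ?_, ?_⟩, fun s hs => Set.subset_sUnion_of_mem hs⟩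
    · obtain ⟨W₀, hW₀⟩ := hcne
      exact (hcS hW₀).2.1.trans (Set.subset_sUnion_of_mem hW₀)
    · intro hmem
      obtain ⟨c', hc'c, hc'fin, hc'Φ⟩ := hScott _ hmem c (fun W hW => (hcS hW).1)
        Set.Subset.rfl
      rcases c'.eq_empty_or_nonempty with rfl | hc'ne
      · rw [Set.sUnion_empty] at hc'Φ
        exact hUΦ (hup ∅ hc'Φ U hUopen (Set.empty_subset U))
      · obtain ⟨g, hgc', hgmax⟩ := exists_greatest_of_chain hchain hc'c hc'fin hc'ne
        have : ⋃₀ c' ⊆ g := Set.sUnion_subset hgmax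
        exact (hcS (hc'c hgc')).2.2 (hup _ hc'Φ g (hcS (hc'c hgc')).1 this)
  obtain ⟨m, hUm, hmmax⟩ := zorn_subset_nonempty S hzorn U hUS
  have hmS : m ∈ S := hmmax.1
  -- mᶜ is irreducible closed
  have hmcne : mᶜ.Nonempty := by
    rw [Set.nonempty_compl]
    intro h
    exact hmS.2.2 (h ▸ huniv)
  have hirr : IsIrreducible mᶜ := by
    refine ⟨hmcne, fun u v hu hv hmu hmv => ?_⟩
    by_contra hcc
    rw [Set.not_nonempty_iff_eq_empty] at hcc
    have huv : u ∩ v ⊆ m := by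
      intro z hz
      by_contra hzm
      exact Set.eq_empty_iff_forall_notMem.mp hcc z ⟨hzm, hz⟩
    have hW : ∀ w : Set Y, IsOpen w → (mᶜ ∩ w).Nonempty → m ∪ w ∈ Φ := by
      intro w hw hne
      by_contra hwΦ
      have : m ∪ w ∈ S := ⟨hmS.1.union hw, hmS.2.1.trans Set.subset_union_left, hwΦ⟩
      have heq : m ∪ w ⊆ m := hmmax.2 this Set.subset_union_left
      obtain ⟨z, hzm, hzw⟩ := hne
      exact hzm (heq (Set.mem_union_right m hzw))
    have h1 : m ∪ u ∈ Φ := hW u hu hmu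
    have h2 : m ∪ v ∈ Φ := hW v hv hmv
    have h3 : (m ∪ u) ∩ (m ∪ v) ∈ Φ := hbin _ h1 _ h2
    rw [← Set.union_inter_distrib_left] at h3
    have : m ∪ u ∩ v = m := Set.union_eq_self_of_subset_right huv
    rw [this] at h3
    exact hmS.2.2 h3
  obtain ⟨x, hx⟩ := hsob mᶜ hirr hmS.1.isClosed_compl
  have hxΦ : x ∈ ⋂₀ Φ := by
    refine Set.mem_sInter.mpr fun W hW => ?_
    have hWm : ¬ W ⊆ m := fun h => hmS.2.2 (hup W hW m hmS.1 h)
    obtain ⟨w, hwW, hwm⟩ := Set.not_subset.mp hWm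
    have hwcl : w ∈ closure ({x} : Set Y) := hx ▸ hwm
    obtain ⟨y, hyW, hyx⟩ := mem_closure_iff.mp hwcl W (hop W hW) hwW
    rw [Set.mem_singleton_iff] at hyx
    exact hyx ▸ hyW
  have hxm : x ∈ mᶜ := hx ▸ subset_closure rfl
  exact hxm (hmS.2.1 (hUsub hxΦ))

/-- The intersection of a Scott-open filter of opens is compact. -/
lemma hofmann_mislove_isCompact
    (hsob : ∀ A : Set Y, IsIrreducible A → IsClosed A → ∃ y, closure {y} = A)
    (Φ : Set (Set Y))
    (hop : ∀ V ∈ Φ, IsOpen V)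
    (huniv : Set.univ ∈ Φ)
    (hup : ∀ V ∈ Φ, ∀ W : Set Y, IsOpen W → V ⊆ W → W ∈ Φ)
    (hbin : ∀ V ∈ Φ, ∀ W ∈ Φ, V ∩ W ∈ Φ)
    (hScott : ∀ V ∈ Φ, ∀ 𝒱 : Set (Set Y), (∀ W ∈ 𝒱, IsOpen W) → V ⊆ ⋃₀ 𝒱 →
      ∃ 𝒱' ⊆ 𝒱, 𝒱'.Finite ∧ ⋃₀ 𝒱' ∈ Φ) :
    IsCompact (⋂₀ Φ) := by
  classical
  apply isCompact_of_finite_subcover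
  intro ι Uf hUf hcov
  have hrange : ⋃ i, Uf i = ⋃₀ Set.range Uf := (Set.sUnion_range Uf).symm
  have hmem : ⋃₀ Set.range Uf ∈ Φ := by
    apply hofmann_mislove hsob Φ hop huniv hup hbin hScott
    · exact isOpen_sUnion (by rintro W ⟨i, rfl⟩; exact hUf i)
    · rw [← hrange]; exact hcov
  obtain ⟨𝒱', h𝒱'sub, h𝒱'fin, h𝒱'Φ⟩ := hScott _ hmem (Set.range Uf)
    (by rintro W ⟨i, rfl⟩; exact hUf i) Set.Subset.rfl
  have hchoice : ∀ W ∈ 𝒱', ∃ i, Uf i = W := fun W hW => h𝒱'sub hW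
  choose f hf using hchoice
  refine ⟨h𝒱'fin.toFinset.attach.image fun W => f W.1 (h𝒱'fin.mem_toFinset.mp W.2), ?_⟩
  intro x hx
  have hx' : x ∈ ⋃₀ 𝒱' := Set.sInter_subset_of_mem h𝒱'Φ hx
  obtain ⟨W, hW𝒱', hxW⟩ := hx'
  simp only [Set.mem_iUnion, Finset.mem_image, Finset.mem_attach]
  exact ⟨f W (h𝒱'fin.mem_toFinset.mp (h𝒱'fin.mem_toFinset.mpr hW𝒱')),
    ⟨⟨⟨W, h𝒱'fin.mem_toFinset.mpr hW𝒱'⟩, by simp⟩, by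
      rw [hf W (h𝒱'fin.mem_toFinset.mp (h𝒱'fin.mem_toFinset.mpr hW𝒱'))]; exact hxW⟩⟩

end HM

section Sober
open Set TopologicalSpace
variable {X : Type*} [TopologicalSpace X]

/-- A locally compact well-filtered space is sober. -/
lemma sober_of_locallyCompact_wellFiltered [LocallyCompactSpace X]
    (hwf : IsWellFilteredSpace X) :
    ∀ A : Set X, IsIrreducible A → IsClosed A → ∃ x, closure {x} = A := by
  intro A hAirr hAcl
  set 𝒞 : Set (Set X) :=
    {Q | (IsCompact Q ∧ IsSaturatedSet Q) ∧ (interior Q ∩ A).Nonempty} with h𝒞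
  have hmk : ∀ (z : X) (V : Set X), IsOpen V → z ∈ V → z ∈ A →
      ∃ Q ∈ 𝒞, Q ⊆ V ∧ z ∈ interior Q := by
    intro z V hV hzV hzA
    obtain ⟨K, hKcomp, hzint, hKV⟩ := exists_compact_between (isCompact_singleton (x := z))
      hV (Set.singleton_subset_iff.mpr hzV)
    refine ⟨satOf K, ⟨⟨hKcomp.satOf, isSaturatedSet_satOf K⟩, ?_⟩, satOf_subset hV hKV, ?_⟩
    · exact ⟨z, interior_mono (subset_satOf K) (hzint rfl), hzA⟩
    · exact interior_mono (subset_satOf K) (hzint rfl)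
  have hne : 𝒞.Nonempty := by
    obtain ⟨a, ha⟩ := hAirr.1
    obtain ⟨Q, hQ, -, -⟩ := hmk a Set.univ isOpen_univ (Set.mem_univ a) ha
    exact ⟨Q, hQ⟩
  have hcs : ∀ K ∈ 𝒞, IsCompact K ∧ IsSaturatedSet K := fun K hK => hK.1
  have hfil : ∀ P ∈ 𝒞, ∀ Q ∈ 𝒞, ∃ R ∈ 𝒞, R ⊆ P ∩ Q := by
    intro P hP Q hQ
    have h1 : (A ∩ interior P).Nonempty := by
      obtain ⟨z, hz1, hz2⟩ := hP.2; exact ⟨z, hz2, hz1⟩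
    have h2 : (A ∩ interior Q).Nonempty := by
      obtain ⟨z, hz1, hz2⟩ := hQ.2; exact ⟨z, hz2, hz1⟩
    obtain ⟨z, hzA, hzP, hzQ⟩ := hAirr.2 (interior P) (interior Q)
      isOpen_interior isOpen_interior h1 h2
    obtain ⟨R, hR, hRsub, -⟩ := hmk z (interior P ∩ interior Q)
      (isOpen_interior.inter isOpen_interior) ⟨hzP, hzQ⟩ hzA
    exact ⟨R, hR, hRsub.trans (Set.inter_subset_inter interior_subset interior_subset)⟩
  have hAne : (⋂₀ 𝒞 ∩ A).Nonempty := by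
    by_contra hc
    rw [Set.not_nonempty_iff_eq_empty] at hc
    have hsub : ⋂₀ 𝒞 ⊆ Aᶜ := by
      intro x hx
      by_contra hxA
      exact Set.eq_empty_iff_forall_notMem.mp hc x ⟨hx, not_not.mp hxA⟩
    obtain ⟨Q, hQ𝒞, hQsub⟩ := hwf 𝒞 hne hcs hfil Aᶜ hAcl.isOpen_compl hsub
    obtain ⟨z, hzint, hzA⟩ := hQ𝒞.2
    exact hQsub (interior_subset hzint) hzA
  obtain ⟨x₀, hx₀𝒞, hx₀A⟩ := hAne
  refine ⟨x₀, Set.Subset.antisymm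
    (closure_minimal (Set.singleton_subset_iff.mpr hx₀A) hAcl) ?_⟩
  intro a ha
  rw [mem_closure_iff]
  intro V hV haV
  obtain ⟨Q, hQ𝒞, hQV, -⟩ := hmk a V hV haV ha
  exact ⟨x₀, hQV (Set.mem_sInter.mp hx₀𝒞 Q hQ𝒞), rfl⟩

end Sober

section PS
open Set TopologicalSpace
variable {X : Type*} [TopologicalSpace X]

/-- The basic open set `□V` of the Smyth powerspace. -/
def psBox (V : Set X) : Set (SmythPow X) := {K : SmythPow X | K.1 ⊆ V}

lemma isOpen_psBox {V : Set X} (hV : IsOpen V) : IsOpen (psBox V) := by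
  show TopologicalSpace.GenerateOpen _ _
  exact TopologicalSpace.GenerateOpen.basic _ ⟨V, hV, rfl⟩

/-- Basic opens form a basis of the Smyth powerspace topology. -/
lemma exists_psBox {𝒰 : Set (SmythPow X)} (h : IsOpen 𝒰) :
    ∀ L ∈ 𝒰, ∃ V, IsOpen V ∧ L.1 ⊆ V ∧ psBox V ⊆ 𝒰 := by
  have h' : TopologicalSpace.GenerateOpen
      {S | ∃ U : Set X, IsOpen U ∧ S = {K : SmythPow X | K.1 ⊆ U}} 𝒰 := h
  clear h
  induction h' with
  | basic S hS =>
    obtain ⟨V, hV, rfl⟩ := hS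
    exact fun L hL => ⟨V, hV, hL, Set.Subset.rfl⟩
  | univ => exact fun L _ => ⟨Set.univ, isOpen_univ, Set.subset_univ _, Set.subset_univ _⟩
  | inter S T hS hT ihS ihT =>
    intro L hL
    obtain ⟨V₁, hV₁, hLV₁, hV₁S⟩ := ihS L hL.1
    obtain ⟨V₂, hV₂, hLV₂, hV₂T⟩ := ihT L hL.2
    exact ⟨V₁ ∩ V₂, hV₁.inter hV₂, Set.subset_inter hLV₁ hLV₂,
      fun K hK => ⟨hV₁S fun x hx => (hK hx).1, hV₂T fun x hx => (hK hx).2⟩⟩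
  | sUnion 𝒮 hmem ih =>
    intro L hL
    obtain ⟨T, hT𝒮, hLT⟩ := hL
    obtain ⟨V, hV, hLV, hVT⟩ := ih T hT𝒮 L hLT
    exact ⟨V, hV, hLV, hVT.trans (Set.subset_sUnion_of_mem hT𝒮)⟩

lemma isCompact_psBox {N : Set X} (hN : IsCompact N) (hNs : IsSaturatedSet N) :
    IsCompact (psBox N) := by
  apply isCompact_of_finite_subcover
  intro ι Uf hUf hcov
  rcases N.eq_empty_or_nonempty with rfl | hNne
  · refine ⟨∅, fun L hL => absurd (Set.subset_empty_iff.mp hL) ?_⟩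
    exact Set.nonempty_iff_ne_empty.mp L.2.1
  · have hPmem : (⟨N, hNne, hN, hNs⟩ : SmythPow X) ∈ psBox N := Set.Subset.rfl
    obtain ⟨i, hi⟩ := Set.mem_iUnion.mp (hcov hPmem)
    obtain ⟨V, hV, hNV, hVsub⟩ := exists_psBox (hUf i) _ hi
    exact ⟨{i}, fun L hL => by
      simp only [Set.mem_iUnion, Finset.mem_singleton]
      exact ⟨i, rfl, hVsub (Set.Subset.trans hL hNV)⟩⟩

/-- A `good` family: a finite collection of compact saturated sets. -/
def psGood (t : Set (Set X)) : Prop :=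
  t.Finite ∧ ∀ N ∈ t, IsCompact N ∧ IsSaturatedSet N

/-- Finite union of basic compact sets `□N`. -/
def psHyper (t : Set (Set X)) : Set (SmythPow X) := {L : SmythPow X | ∃ N ∈ t, L.1 ⊆ N}

lemma psHyper_eq (t : Set (Set X)) : psHyper t = ⋃ N ∈ t, psBox N := by
  ext L
  simp only [psHyper, psBox, Set.mem_setOf_eq, Set.mem_iUnion]
  exact ⟨fun ⟨N, h1, h2⟩ => ⟨N, h1, h2⟩, fun ⟨N, h1, h2⟩ => ⟨N, h1, h2⟩⟩

lemma isCompact_psHyper {t : Set (Set X)} (ht : psGood t) : IsCompact (psHyper t) := by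
  rw [psHyper_eq]
  exact ht.1.isCompact_biUnion fun N hN => isCompact_psBox (ht.2 N hN).1 (ht.2 N hN).2

lemma isSaturated_psHyper {t : Set (Set X)} (ht : psGood t) :
    IsSaturatedSet (psHyper t) := by
  apply Set.Subset.antisymm (subset_satOf _)
  intro L hL
  by_contra hLmem
  have hchoice : ∀ N : t, ∃ V : Set X, IsOpen V ∧ (N : Set X) ⊆ V ∧ ¬ L.1 ⊆ V := by
    rintro ⟨N, hNt⟩
    have hLN : ¬ L.1 ⊆ N := fun h => hLmem ⟨N, hNt, h⟩
    obtain ⟨x, hxL, hxN⟩ := Set.not_subset.mp hLN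
    obtain ⟨V, hV, hNV, hxV⟩ := (ht.2 N hNt).2.exists_open_not_mem hxN
    exact ⟨V, hV, hNV, fun h => hxV (h hxL)⟩
  choose Vf hVf using hchoice
  set 𝒲 : Set (SmythPow X) := ⋃ N : t, psBox (Vf N) with h𝒲
  have h𝒲open : IsOpen 𝒲 := isOpen_iUnion fun N => isOpen_psBox (hVf N).1
  have h𝒲sub : psHyper t ⊆ 𝒲 := by
    rintro L' ⟨N, hNt, hL'N⟩
    exact Set.mem_iUnion.mpr ⟨⟨N, hNt⟩, hL'N.trans (hVf ⟨N, hNt⟩).2.1⟩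
  have hL𝒲 : L ∈ 𝒲 := Set.mem_sInter.mp hL 𝒲 ⟨h𝒲open, h𝒲sub⟩
  obtain ⟨N, hLN⟩ := Set.mem_iUnion.mp hL𝒲
  exact (hVf N).2.2 hLN

lemma psHyper_inter {t s : Set (Set X)} (hcoh : IsCoherentSpace X)
    (ht : psGood t) (hs : psGood s) :
    psGood (Set.image2 (· ∩ ·) t s) ∧
      psHyper t ∩ psHyper s = psHyper (Set.image2 (· ∩ ·) t s) := by
  constructor
  · refine ⟨ht.1.image2 _ hs.1, ?_⟩
    rintro N ⟨N₁, hN₁, N₂, hN₂, rfl⟩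
    exact ⟨hcoh N₁ N₂ (ht.2 N₁ hN₁).1 (ht.2 N₁ hN₁).2 (hs.2 N₂ hN₂).1 (hs.2 N₂ hN₂).2,
      (ht.2 N₁ hN₁).2.inter (hs.2 N₂ hN₂).2⟩
  · ext L
    constructor
    · rintro ⟨⟨N₁, hN₁, hLN₁⟩, ⟨N₂, hN₂, hLN₂⟩⟩
      exact ⟨N₁ ∩ N₂, Set.mem_image2_of_mem hN₁ hN₂, Set.subset_inter hLN₁ hLN₂⟩
    · rintro ⟨N, ⟨N₁, hN₁, N₂, hN₂, rfl⟩, hLN⟩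
      exact ⟨⟨N₁, hN₁, hLN.trans Set.inter_subset_left⟩,
        ⟨N₂, hN₂, hLN.trans Set.inter_subset_right⟩⟩

/-- Surrounder lemma: every compact subset of an open set `𝒰 ⊆ P_S(X)` can be trapped
between `𝒰` and a finite union of `□N`'s. -/
lemma psSurround [LocallyCompactSpace X] {Q 𝒰 : Set (SmythPow X)}
    (hQ : IsCompact Q) (h𝒰 : IsOpen 𝒰) (hsub : Q ⊆ 𝒰) :
    ∃ t : Set (Set X), psGood t ∧ Q ⊆ psHyper t ∧ psHyper t ⊆ 𝒰 := by
  classical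
  have hchoice : ∀ L : Q, ∃ M : Set X, (IsCompact M ∧ IsSaturatedSet M) ∧
      (L : SmythPow X).1 ⊆ interior M ∧ psBox M ⊆ 𝒰 := by
    rintro ⟨L, hLQ⟩
    obtain ⟨V, hV, hLV, hVsub⟩ := exists_psBox h𝒰 L (hsub hLQ)
    obtain ⟨M, hMcomp, hLint, hMV⟩ := exists_compact_between L.2.2.1 hV hLV
    refine ⟨satOf M, ⟨hMcomp.satOf, isSaturatedSet_satOf M⟩,
      hLint.trans (interior_mono (subset_satOf M)), ?_⟩
    intro K hK
    exact hVsub (Set.Subset.trans hK (satOf_subset hV hMV))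
  choose Mf hMf using hchoice
  have hcov : Q ⊆ ⋃ L : Q, psBox (interior (Mf L)) := by
    intro L hLQ
    exact Set.mem_iUnion.mpr ⟨⟨L, hLQ⟩, (hMf ⟨L, hLQ⟩).2.1⟩
  obtain ⟨tf, htf⟩ := hQ.elim_finite_subcover _
    (fun L : Q => isOpen_psBox (isOpen_interior (s := Mf L))) hcov
  refine ⟨Mf '' ↑tf, ⟨(tf.finite_toSet).image _, ?_⟩, ?_, ?_⟩
  · rintro N ⟨L, -, rfl⟩
    exact (hMf L).1
  · intro L hLQ
    obtain ⟨L', hL'mem⟩ := Set.mem_iUnion.mp (htf hLQ)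
    simp only [Set.mem_iUnion] at hL'mem
    obtain ⟨hL'tf, hLbox⟩ := hL'mem
    exact ⟨Mf L', ⟨L', hL'tf, rfl⟩, hLbox.trans interior_subset⟩
  · rintro K ⟨N, ⟨L, hLtf, rfl⟩, hKN⟩
    exact (hMf L).2.2 hKN

end PS

section PSSober
open Set TopologicalSpace
variable {X : Type*} [TopologicalSpace X]

/-- The Smyth powerspace of a locally compact well-filtered space is sober. -/
lemma psSober [LocallyCompactSpace X] (hwf : IsWellFilteredSpace X) :
    ∀ 𝒜 : Set (SmythPow X), IsIrreducible 𝒜 → IsClosed 𝒜 →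
      ∃ P : SmythPow X, closure {P} = 𝒜 := by
  have hsob := sober_of_locallyCompact_wellFiltered hwf
  intro 𝒜 h𝒜irr h𝒜cl
  set Φ : Set (Set X) := {V | IsOpen V ∧ ∃ K ∈ 𝒜, (K : SmythPow X).1 ⊆ V} with hΦdef
  have hop : ∀ V ∈ Φ, IsOpen V := fun V hV => hV.1
  have huniv : Set.univ ∈ Φ := by
    obtain ⟨K, hK⟩ := h𝒜irr.1
    exact ⟨isOpen_univ, K, hK, Set.subset_univ _⟩
  have hup : ∀ V ∈ Φ, ∀ W : Set X, IsOpen W → V ⊆ W → W ∈ Φ := by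
    rintro V ⟨hV, K, hK𝒜, hKV⟩ W hW hVW
    exact ⟨hW, K, hK𝒜, hKV.trans hVW⟩
  have hbin : ∀ V ∈ Φ, ∀ W ∈ Φ, V ∩ W ∈ Φ := by
    rintro V ⟨hV, K₁, hK₁, hK₁V⟩ W ⟨hW, K₂, hK₂, hK₂W⟩
    have h1 : (𝒜 ∩ psBox V).Nonempty := ⟨K₁, hK₁, hK₁V⟩
    have h2 : (𝒜 ∩ psBox W).Nonempty := ⟨K₂, hK₂, hK₂W⟩
    obtain ⟨K, hK𝒜, hKV, hKW⟩ := h𝒜irr.2 (psBox V) (psBox W)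
      (isOpen_psBox hV) (isOpen_psBox hW) h1 h2
    exact ⟨hV.inter hW, K, hK𝒜, Set.subset_inter hKV hKW⟩
  have hScott : ∀ V ∈ Φ, ∀ 𝒱 : Set (Set X), (∀ W ∈ 𝒱, IsOpen W) → V ⊆ ⋃₀ 𝒱 →
      ∃ 𝒱' ⊆ 𝒱, 𝒱'.Finite ∧ ⋃₀ 𝒱' ∈ Φ := by
    rintro V ⟨hV, K, hK𝒜, hKV⟩ 𝒱 h𝒱op h𝒱cov
    have hcov : K.1 ⊆ ⋃ W : 𝒱, (W : Set X) := by
      intro x hx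
      obtain ⟨W, hW𝒱, hxW⟩ := h𝒱cov (hKV hx)
      exact Set.mem_iUnion.mpr ⟨⟨W, hW𝒱⟩, hxW⟩
    obtain ⟨tf, htf⟩ := K.2.2.1.elim_finite_subcover (fun W : 𝒱 => (W : Set X))
      (fun W => h𝒱op W W.2) hcov
    refine ⟨Subtype.val '' ↑tf, by rintro W ⟨W', -, rfl⟩; exact W'.2,
      (tf.finite_toSet).image _, ?_⟩
    refine ⟨isOpen_sUnion ?_, K, hK𝒜, ?_⟩
    · rintro W ⟨W', -, rfl⟩; exact h𝒱op _ W'.2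
    · intro x hx
      obtain ⟨W, hWmem⟩ := Set.mem_iUnion.mp (htf hx)
      simp only [Set.mem_iUnion] at hWmem
      exact ⟨W, ⟨W, hWmem.1, rfl⟩, hWmem.2⟩
  have hmain := hofmann_mislove hsob Φ hop huniv hup hbin hScott
  set K₀ : Set X := ⋂₀ Φ with hK₀def
  have hK₀sat : IsSaturatedSet K₀ := by
    apply Set.Subset.antisymm (subset_satOf _)
    intro x hx
    exact Set.mem_sInter.mpr fun V hV =>
      Set.mem_sInter.mp hx V ⟨hV.1, Set.sInter_subset_of_mem hV⟩
  have hK₀comp : IsCompact K₀ := hofmann_mislove_isCompact hsob Φ hop huniv hup hbin hScott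
  have hK₀ne : K₀.Nonempty := by
    by_contra hc
    rw [Set.not_nonempty_iff_eq_empty] at hc
    obtain ⟨-, K, -, hKsub⟩ := hmain ∅ isOpen_empty (hc ▸ Set.Subset.rfl)
    exact Set.nonempty_iff_ne_empty.mp K.2.1 (Set.subset_empty_iff.mp hKsub)
  set P₀ : SmythPow X := ⟨K₀, hK₀ne, hK₀comp, hK₀sat⟩ with hP₀def
  have hP₀𝒜 : P₀ ∈ 𝒜 := by
    by_contra hc
    obtain ⟨V, hV, hK₀V, hVsub⟩ := exists_psBox h𝒜cl.isOpen_compl P₀ hc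
    obtain ⟨-, K, hK𝒜, hKV⟩ := hmain V hV fun x hx => hK₀V hx
    exact hVsub hKV hK𝒜
  refine ⟨P₀, Set.Subset.antisymm
    (closure_minimal (Set.singleton_subset_iff.mpr hP₀𝒜) h𝒜cl) ?_⟩
  intro K hK𝒜
  rw [mem_closure_iff]
  intro 𝒰 h𝒰 hK𝒰
  obtain ⟨V, hV, hKV, hVsub⟩ := exists_psBox h𝒰 K hK𝒰
  have hVΦ : V ∈ Φ := ⟨hV, K, hK𝒜, hKV⟩
  exact ⟨P₀, hVsub (Set.sInter_subset_of_mem hVΦ), rfl⟩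

end PSSober

theorem stmt6 {X : Type*} [TopologicalSpace X] [T0Space X] [LocallyCompactSpace X]
    (hcoh : IsCoherentSpace X) (hwf : IsWellFilteredSpace X) :
    IsStrongRSpace (SmythPow X) := by
  classical
  intro 𝒦 h𝒦 𝒰 h𝒰 hsub
  rcases 𝒦.eq_empty_or_nonempty with rfl | ⟨Q₀, hQ₀⟩
  · exact ⟨∅, Set.Subset.rfl, Set.finite_empty, hsub⟩
  -- the approximating family
  set 𝒟 : Set (Set (SmythPow X)) :=
    {D | (∃ t : Set (Set X), psGood t ∧ D = psHyper t) ∧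
      ∃ ℱ : Set (Set (SmythPow X)), ℱ ⊆ 𝒦 ∧ ℱ.Finite ∧ ℱ.Nonempty ∧ ⋂₀ ℱ ⊆ D} with h𝒟def
  have hsurr : ∀ Q ∈ 𝒦, ∀ 𝒰' : Set (SmythPow X), IsOpen 𝒰' → Q ⊆ 𝒰' →
      ∃ D ∈ 𝒟, D ⊆ 𝒰' := by
    intro Q hQ 𝒰' h𝒰' hQ𝒰'
    obtain ⟨t, htg, hQt, ht𝒰'⟩ := psSurround (h𝒦 Q hQ).1 h𝒰' hQ𝒰'
    refine ⟨psHyper t, ⟨⟨t, htg, rfl⟩, {Q}, Set.singleton_subset_iff.mpr hQ,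
      Set.finite_singleton Q, Set.singleton_nonempty Q, ?_⟩, ht𝒰'⟩
    rw [Set.sInter_singleton]
    exact hQt
  have h𝒟ne : 𝒟.Nonempty := by
    obtain ⟨D, hD, -⟩ := hsurr Q₀ hQ₀ Set.univ isOpen_univ (Set.subset_univ _)
    exact ⟨D, hD⟩
  have h𝒟cs : ∀ D ∈ 𝒟, IsCompact D ∧ IsSaturatedSet D := by
    rintro D ⟨⟨t, htg, rfl⟩, -⟩
    exact ⟨isCompact_psHyper htg, isSaturated_psHyper htg⟩
  have h𝒟fil : ∀ D₁ ∈ 𝒟, ∀ D₂ ∈ 𝒟, ∃ D₃ ∈ 𝒟, D₃ ⊆ D₁ ∩ D₂ := by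
    rintro D₁ ⟨⟨t₁, ht₁, rfl⟩, ℱ₁, hℱ₁𝒦, hℱ₁fin, hℱ₁ne, hℱ₁sub⟩
      D₂ ⟨⟨t₂, ht₂, rfl⟩, ℱ₂, hℱ₂𝒦, hℱ₂fin, hℱ₂ne, hℱ₂sub⟩
    obtain ⟨htg, hteq⟩ := psHyper_inter hcoh ht₁ ht₂
    refine ⟨psHyper t₁ ∩ psHyper t₂, ⟨⟨_, htg, hteq⟩,
      ℱ₁ ∪ ℱ₂, Set.union_subset hℱ₁𝒦 hℱ₂𝒦, hℱ₁fin.union hℱ₂fin,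
      hℱ₁ne.mono Set.subset_union_left, ?_⟩, Set.Subset.rfl⟩
    rw [Set.sInter_union]
    exact Set.inter_subset_inter hℱ₁sub hℱ₂sub
  have h𝒟sub : ⋂₀ 𝒟 ⊆ 𝒰 := by
    refine Set.Subset.trans ?_ hsub
    intro L hL
    refine Set.mem_sInter.mpr fun Q hQ => ?_
    by_contra hLQ
    obtain ⟨𝒰', h𝒰'op, hQ𝒰', hL𝒰'⟩ := (h𝒦 Q hQ).2.exists_open_not_mem hLQ
    obtain ⟨D, hD𝒟, hD𝒰'⟩ := hsurr Q hQ 𝒰' h𝒰'op hQ𝒰'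
    exact hL𝒰' (hD𝒰' (Set.mem_sInter.mp hL D hD𝒟))
  have hpswf : IsWellFilteredSpace (SmythPow X) := wellFiltered_of_sober (psSober hwf)
  obtain ⟨D, hD𝒟, hD𝒰⟩ := hpswf 𝒟 h𝒟ne h𝒟cs h𝒟fil 𝒰 h𝒰 h𝒟sub
  obtain ⟨-, ℱ, hℱ𝒦, hℱfin, -, hℱsub⟩ := hD𝒟
  exact ⟨ℱ, hℱ𝒦, hℱfin, hℱsub.trans hD𝒰⟩
end

section
/- Let (X, τ) be a T0 topological space and τ^p its patch topology. Then (X, τ^p) is compact if and only if (X, τ) is a compact, coherent strong R-space. -/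
section Aux

open scoped Topology

open Set TopologicalSpace

variable {X : Type*} [TopologicalSpace X]

lemma satAux_mem_sInter {A : Set X} : A ⊆ ⋂₀ {U : Set X | IsOpen U ∧ A ⊆ U} :=
  fun _ ha _ hU => hU.2 ha

lemma satAux_sInter_subset (A : Set X) :
    ⋂₀ {U : Set X | IsOpen U ∧ A ⊆ U} ⊆ specUpperClosure A := by
  intro y hy
  by_contra h
  have hV : ∀ a ∈ A, ∃ V : Set X, IsOpen V ∧ a ∈ V ∧ y ∉ V := by
    intro a ha
    have ha' : a ∉ closure ({y} : Set X) := fun hc => h ⟨a, ha, hc⟩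
    rw [mem_closure_iff] at ha'
    push_neg at ha'
    obtain ⟨V, hV, haV, hVy⟩ := ha'
    exact ⟨V, hV, haV, fun hyV => Set.notMem_empty y (hVy ▸ Set.mem_inter hyV rfl)⟩
  choose! V hVopen hVmem hVy using hV
  have : y ∈ ⋃ a ∈ A, V a :=
    hy _ ⟨isOpen_biUnion fun a ha => hVopen a ha, fun a ha => mem_biUnion ha (hVmem a ha)⟩
  obtain ⟨a, ha, hya⟩ := mem_iUnion₂.mp this
  exact hVy a ha hya

lemma satAux_upper {K : Set X} (hK : IsSaturatedSet K) {a y : X} (ha : a ∈ K)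
    (hc : a ∈ closure ({y} : Set X)) : y ∈ K := by
  rw [IsSaturatedSet] at hK
  rw [hK]
  rintro U ⟨hU, hKU⟩
  obtain ⟨z, hzU, hz⟩ := mem_closure_iff.mp hc U hU (hKU ha)
  rwa [show z = y from hz] at hzU

lemma satAux_univ : IsSaturatedSet (Set.univ : Set X) :=
  Set.Subset.antisymm satAux_mem_sInter (Set.subset_univ _)

lemma satAux_inter {K₁ K₂ : Set X} (h₁ : IsSaturatedSet K₁) (h₂ : IsSaturatedSet K₂) :
    IsSaturatedSet (K₁ ∩ K₂) := by
  refine Set.Subset.antisymm satAux_mem_sInter fun y hy => ?_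
  obtain ⟨a, ha, hc⟩ := satAux_sInter_subset _ hy
  exact ⟨satAux_upper h₁ ha.1 hc, satAux_upper h₂ ha.2 hc⟩

lemma satAux_finite_sInter [CompactSpace X] (hcoh : IsCoherentSpace X)
    {ℱ : Set (Set X)} (hfin : ℱ.Finite) :
    (∀ K ∈ ℱ, IsCompact K ∧ IsSaturatedSet K) →
      IsCompact (⋂₀ ℱ) ∧ IsSaturatedSet (⋂₀ ℱ) := by
  refine Set.Finite.induction_on _ hfin (fun _ => ?_) ?_
  · simpa using ⟨isCompact_univ, satAux_univ⟩
  · intro K s _ _ ih h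
    rw [Set.sInter_insert]
    have hK := h K (Set.mem_insert _ _)
    have hrest := ih fun L hL => h L (Set.mem_insert_of_mem _ hL)
    exact ⟨hcoh _ _ hK.1 hK.2 hrest.1 hrest.2, satAux_inter hK.2 hrest.2⟩

/-- Alexander's subbase lemma. -/
lemma alexanderSub {Y : Type*} (g : Set (Set Y))
    (h : ∀ 𝒞 ⊆ g, Set.univ ⊆ ⋃₀ 𝒞 → ∃ 𝒟 ⊆ 𝒞, 𝒟.Finite ∧ Set.univ ⊆ ⋃₀ 𝒟) :
    @CompactSpace Y (TopologicalSpace.generateFrom g) := by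
  letI t : TopologicalSpace Y := TopologicalSpace.generateFrom g
  refine ⟨isCompact_iff_ultrafilter_le_nhds.mpr fun f _ => ?_⟩
  by_contra hf
  push_neg at hf
  have key : ∀ x : Y, ∃ s ∈ g, x ∈ s ∧ s ∉ f := by
    intro x
    by_contra hx
    push_neg at hx
    refine hf x (Set.mem_univ x) ?_
    rw [TopologicalSpace.nhds_generateFrom]
    exact le_iInf₂ fun s hs => Filter.le_principal_iff.mpr (hx s hs.2 hs.1)
  choose s hsg hxs hsf using key
  obtain ⟨𝒟, h𝒟g, h𝒟fin, h𝒟cov⟩ := h (Set.range s) (Set.range_subset_iff.mpr hsg)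
    (fun x _ => ⟨s x, Set.mem_range_self x, hxs x⟩)
  have hmem : ⋃₀ 𝒟 ∈ f := Filter.mem_of_superset Filter.univ_mem h𝒟cov
  obtain ⟨u, hu𝒟, huf⟩ := (Ultrafilter.finite_sUnion_mem_iff h𝒟fin).mp hmem
  obtain ⟨x, rfl⟩ := h𝒟g hu𝒟
  exact hsf x huf

lemma unAux {Y : Type*} [t : TopologicalSpace Y] {s u : Set Y}
    (h1 : IsOpen s) (h2 : IsOpen u) : IsOpen (s ∪ u) := h1.union h2

lemma clCompAux {Y : Type*} [t : TopologicalSpace Y] [CompactSpace Y] {s : Set Y}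
    (h : IsOpen sᶜ) : IsCompact s := (⟨h⟩ : IsClosed s).isCompact

lemma fsubAux {Y : Type*} [t : TopologicalSpace Y] [CompactSpace Y] {ι : Type*} (U : ι → Set Y)
    (hU : ∀ i, IsOpen (U i)) (hcov : (Set.univ : Set Y) ⊆ ⋃ i, U i) :
    ∃ s : Finset ι, (Set.univ : Set Y) ⊆ ⋃ i ∈ s, U i :=
  isCompact_univ.elim_finite_subcover U hU hcov

lemma compAux {Y : Type*} {t p : TopologicalSpace Y} (h : p ≤ t)
    {s : Set Y} (hs : @IsCompact Y p s) : @IsCompact Y t s := by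
  have himg := @IsCompact.image Y Y p t s id hs (continuous_id_of_le h)
  simpa using himg

end Aux

open scoped Topology in
theorem stmt7 {X : Type*} [TopologicalSpace X] [T0Space X] :
    @CompactSpace X (patchTop X) ↔
      (CompactSpace X ∧ IsCoherentSpace X ∧ IsStrongRSpace X) := by
  classical
  have hbasic : ∀ s : Set X,
      (IsOpen s ∨ ∃ K : Set X, IsCompact K ∧ IsSaturatedSet K ∧ s = Kᶜ) →
      IsOpen[patchTop X] s := fun s hs =>
    TopologicalSpace.isOpen_generateFrom_of_mem hs
  constructor
  · intro hp
    have hle : patchTop X ≤ ‹TopologicalSpace X› :=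
      isOpen_implies_isOpen_iff.mp fun s hs => hbasic s (Or.inl hs)
    have hcX : CompactSpace X :=
      ⟨compAux hle (@CompactSpace.isCompact_univ X (patchTop X) hp)⟩
    refine ⟨hcX, ?_, ?_⟩
    · -- coherent
      intro K₁ K₂ hc₁ hs₁ hc₂ hs₂
      have h₁ : IsOpen[patchTop X] K₁ᶜ := hbasic _ (Or.inr ⟨K₁, hc₁, hs₁, rfl⟩)
      have h₂ : IsOpen[patchTop X] K₂ᶜ := hbasic _ (Or.inr ⟨K₂, hc₂, hs₂, rfl⟩)
      have hopenc : IsOpen[patchTop X] (K₁ ∩ K₂)ᶜ := by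
        rw [Set.compl_inter]
        exact @unAux X (patchTop X) _ _ h₁ h₂
      exact compAux hle (@clCompAux X (patchTop X) hp _ hopenc)
    · -- strong R-space
      intro 𝒦 h𝒦 U hU hsub
      rcases Set.eq_empty_or_nonempty 𝒦 with rfl | _
      · exact ⟨∅, Set.Subset.rfl, Set.finite_empty, by simpa using hsub⟩
      · have hopen : ∀ K : 𝒦, IsOpen[patchTop X] (U ∪ (K : Set X)ᶜ) := fun K =>
          @unAux X (patchTop X) _ _ (hbasic U (Or.inl hU))
            (hbasic _ (Or.inr ⟨K, (h𝒦 K K.2).1, (h𝒦 K K.2).2, rfl⟩))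
        have hcov : (Set.univ : Set X) ⊆ ⋃ K : 𝒦, (U ∪ (K : Set X)ᶜ) := by
          intro x _
          by_cases hx : ∀ K ∈ 𝒦, x ∈ K
          · have : x ∈ U := hsub fun K hK => hx K hK
            exact Set.mem_iUnion.mpr ⟨⟨_, ‹𝒦.Nonempty›.choose_spec⟩, Or.inl this⟩
          · push_neg at hx
            obtain ⟨K, hK, hxK⟩ := hx
            exact Set.mem_iUnion.mpr ⟨⟨K, hK⟩, Or.inr hxK⟩
        obtain ⟨t, ht⟩ := @fsubAux X (patchTop X) hp ↥𝒦
          (fun K : 𝒦 => U ∪ (K : Set X)ᶜ) hopen hcov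
        refine ⟨(fun K : 𝒦 => (K : Set X)) '' (t : Set 𝒦), ?_, t.finite_toSet.image _, ?_⟩
        · rintro S ⟨K, _, rfl⟩; exact K.2
        · intro x hx
          obtain ⟨K, hKt, hKx⟩ := Set.mem_iUnion₂.mp (ht (Set.mem_univ x))
          rcases hKx with hxU | hxK
          · exact hxU
          · exact absurd (hx _ ⟨K, hKt, rfl⟩) hxK
  · rintro ⟨hc, hcoh, hR⟩
    refine alexanderSub _ ?_
    intro 𝒞 h𝒞g hcov
    set 𝒪 : Set (Set X) := {S ∈ 𝒞 | IsOpen S} with h𝒪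
    set 𝒦 : Set (Set X) := {K : Set X | IsCompact K ∧ IsSaturatedSet K ∧ Kᶜ ∈ 𝒞} with h𝒦
    have hsub : ⋂₀ 𝒦 ⊆ ⋃₀ 𝒪 := by
      intro x hx
      obtain ⟨S, hS𝒞, hxS⟩ := hcov (Set.mem_univ x)
      rcases h𝒞g hS𝒞 with hSopen | ⟨K, hKc, hKs, rfl⟩
      · exact Set.mem_sUnion.mpr ⟨S, ⟨hS𝒞, hSopen⟩, hxS⟩
      · exact absurd (Set.mem_sInter.mp hx K ⟨hKc, hKs, hS𝒞⟩) hxS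
    obtain ⟨ℱ, hℱ𝒦, hℱfin, hℱ⟩ := hR 𝒦 (fun K hK => ⟨hK.1, hK.2.1⟩) (⋃₀ 𝒪)
      (isOpen_sUnion fun S hS => hS.2) hsub
    have hcomp := satAux_finite_sInter hcoh hℱfin
      (fun K hK => ⟨(hℱ𝒦 hK).1, (hℱ𝒦 hK).2.1⟩)
    have hcov2 : ⋂₀ ℱ ⊆ ⋃ S ∈ 𝒪, S := by rwa [← Set.sUnion_eq_biUnion]
    obtain ⟨𝒪', h𝒪'sub, h𝒪'fin, hcov'⟩ := hcomp.1.elim_finite_subcover_image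
      (fun S hS => hS.2) hcov2
    refine ⟨𝒪' ∪ (compl '' ℱ), ?_, h𝒪'fin.union (hℱfin.image _), ?_⟩
    · rintro S (hS | ⟨K, hK, rfl⟩)
      · exact (h𝒪'sub hS).1
      · exact (hℱ𝒦 hK).2.2
    · intro x _
      by_cases hx : x ∈ ⋂₀ ℱ
      · obtain ⟨S, hS, hxS⟩ := Set.mem_iUnion₂.mp (hcov' hx)
        exact Set.mem_sUnion.mpr ⟨S, Or.inl hS, hxS⟩
      · rw [Set.mem_sInter] at hx
        push_neg at hx
        obtain ⟨K, hK, hxK⟩ := hx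
        exact Set.mem_sUnion.mpr ⟨Kᶜ, Or.inr ⟨K, hK, rfl⟩, hxK⟩
end

section
/- For a topological space X, the following conditions are equivalent: (1) for each open set V and each filter basis 𝒰 of open sets (i.e., any two members of 𝒰 contain a common member of 𝒰) with ⋂𝒰 ⊆ V, there is U ∈ 𝒰 with U ⊆ V; (2) for each open set V and each family 𝒰 of open sets with ⋂𝒰 ⊆ V, there is a finite subfamily 𝒰₀ ⊆ 𝒰 with ⋂𝒰₀ ⊆ V; (3) for each open set V and each filter basis 𝒮 of saturated sets with ⋂𝒮 ⊆ V, there is S ∈ 𝒮 with S ⊆ V; (4) for each open set V and each family 𝒮 of saturated sets with ⋂𝒮 ⊆ V, there is a finite subfamily 𝒮₀ ⊆ 𝒮 with ⋂𝒮₀ ⊆ V; (5) every closed subset of X is the closure of a finite set. -/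
lemma isSaturated_of_isOpen {Y : Type*} [TopologicalSpace Y] {U : Set Y} (hU : IsOpen U) :
    IsSaturatedSet U := by
  apply subset_antisymm
  · intro x hx W hW
    exact hW.2 hx
  · intro x hx
    exact hx U ⟨hU, subset_rfl⟩

lemma saturated_sep {Y : Type*} [TopologicalSpace Y] {S : Set Y} (hS : IsSaturatedSet S)
    {x : Y} (hx : x ∉ S) : ∃ U : Set Y, IsOpen U ∧ S ⊆ U ∧ x ∉ U := by
  rw [hS] at hx
  simp only [Set.mem_sInter, Set.mem_setOf_eq, not_forall] at hx
  obtain ⟨U, ⟨hUo, hSU⟩, hxU⟩ := hx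
  exact ⟨U, hUo, hSU, hxU⟩

lemma directed_lower {Y : Type*} {𝒮 : Set (Set Y)} (hne : 𝒮.Nonempty)
    (hdir : ∀ A ∈ 𝒮, ∀ B ∈ 𝒮, ∃ C ∈ 𝒮, C ⊆ A ∩ B)
    {𝒮₀ : Set (Set Y)} (hfin : 𝒮₀.Finite) (hsub : 𝒮₀ ⊆ 𝒮) :
    ∃ S ∈ 𝒮, S ⊆ ⋂₀ 𝒮₀ := by
  revert hsub
  refine Set.Finite.induction_on (motive := fun t _ => t ⊆ 𝒮 → ∃ S ∈ 𝒮, S ⊆ ⋂₀ t) 𝒮₀ hfin ?_ ?_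
  · intro _
    obtain ⟨S, hS⟩ := hne
    exact ⟨S, hS, by simp⟩
  · intro A t hA htfin ih hsub
    obtain ⟨S, hS, hSsub⟩ := ih (fun x hx => hsub (Set.mem_insert_of_mem _ hx))
    obtain ⟨C, hC, hCsub⟩ := hdir A (hsub (Set.mem_insert _ _)) S hS
    refine ⟨C, hC, ?_⟩
    rw [Set.sInter_insert]
    exact subset_trans hCsub (Set.inter_subset_inter_right _ hSsub)

lemma closure_finite_mem {Y : Type*} [TopologicalSpace Y] {F : Set Y} (hF : F.Finite)
    {y : Y} (hy : y ∈ closure F) : ∃ x ∈ F, y ∈ closure {x} := by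
  have hcl : IsClosed (⋃ x ∈ F, closure {x}) :=
    hF.isClosed_biUnion (fun x _ => isClosed_closure)
  have hsub : closure F ⊆ ⋃ x ∈ F, closure {x} := by
    apply closure_minimal _ hcl
    intro x hx
    exact Set.mem_biUnion hx (subset_closure rfl)
  simpa using hsub hy

theorem stmt8 {X : Type*} [TopologicalSpace X] :
    List.TFAE [
      ∀ V : Set X, IsOpen V → ∀ 𝒰 : Set (Set X), 𝒰.Nonempty → (∀ U ∈ 𝒰, IsOpen U) →
        (∀ U₁ ∈ 𝒰, ∀ U₂ ∈ 𝒰, ∃ U₃ ∈ 𝒰, U₃ ⊆ U₁ ∩ U₂) → ⋂₀ 𝒰 ⊆ V → ∃ U ∈ 𝒰, U ⊆ V,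
      ∀ V : Set X, IsOpen V → ∀ 𝒰 : Set (Set X), (∀ U ∈ 𝒰, IsOpen U) → ⋂₀ 𝒰 ⊆ V →
        ∃ 𝒰₀ ⊆ 𝒰, 𝒰₀.Finite ∧ ⋂₀ 𝒰₀ ⊆ V,
      ∀ V : Set X, IsOpen V → ∀ 𝒮 : Set (Set X), 𝒮.Nonempty → (∀ S ∈ 𝒮, IsSaturatedSet S) →
        (∀ S₁ ∈ 𝒮, ∀ S₂ ∈ 𝒮, ∃ S₃ ∈ 𝒮, S₃ ⊆ S₁ ∩ S₂) → ⋂₀ 𝒮 ⊆ V → ∃ S ∈ 𝒮, S ⊆ V,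
      ∀ V : Set X, IsOpen V → ∀ 𝒮 : Set (Set X), (∀ S ∈ 𝒮, IsSaturatedSet S) → ⋂₀ 𝒮 ⊆ V →
        ∃ 𝒮₀ ⊆ 𝒮, 𝒮₀.Finite ∧ ⋂₀ 𝒮₀ ⊆ V,
      ∀ C : Set X, IsClosed C → ∃ F : Set X, F.Finite ∧ C = closure F
    ] := by
  tfae_have 1 → 2 := by
    intro h1 V hV 𝒰 hop hsub
    set 𝒰' : Set (Set X) := {W | ∃ F ⊆ 𝒰, F.Finite ∧ W = ⋂₀ F} with h𝒰'
    have hne : 𝒰'.Nonempty := ⟨Set.univ, ∅, by simp⟩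
    have hop' : ∀ W ∈ 𝒰', IsOpen W := by
      rintro W ⟨F, hF𝒰, hFfin, rfl⟩
      exact hFfin.isOpen_sInter (fun U hU => hop U (hF𝒰 hU))
    have hdir : ∀ U₁ ∈ 𝒰', ∀ U₂ ∈ 𝒰', ∃ U₃ ∈ 𝒰', U₃ ⊆ U₁ ∩ U₂ := by
      rintro W₁ ⟨F₁, hF₁, hf₁, rfl⟩ W₂ ⟨F₂, hF₂, hf₂, rfl⟩
      refine ⟨⋂₀ (F₁ ∪ F₂), ⟨F₁ ∪ F₂, Set.union_subset hF₁ hF₂, hf₁.union hf₂, rfl⟩, ?_⟩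
      rw [Set.sInter_union]
    have hint : ⋂₀ 𝒰' ⊆ V := by
      refine subset_trans ?_ hsub
      intro x hx U hU
      have hU' : U ∈ 𝒰' :=
        ⟨{U}, Set.singleton_subset_iff.mpr hU, Set.finite_singleton U,
          (Set.sInter_singleton U).symm⟩
      exact hx U hU'
    obtain ⟨W, ⟨F, hF𝒰, hFfin, rfl⟩, hWV⟩ := h1 V hV 𝒰' hne hop' hdir hint
    exact ⟨F, hF𝒰, hFfin, hWV⟩
  tfae_have 2 → 5 := by
    intro h2 C hC
    set 𝒰 : Set (Set X) := {W | ∃ F ⊆ C, F.Finite ∧ W = (closure F)ᶜ} with h𝒰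
    have hop : ∀ U ∈ 𝒰, IsOpen U := by
      rintro W ⟨F, _, _, rfl⟩
      exact isClosed_closure.isOpen_compl
    have hint : ⋂₀ 𝒰 ⊆ Cᶜ := by
      intro x hx hxC
      have : x ∈ (closure ({x} : Set X))ᶜ :=
        hx _ ⟨{x}, Set.singleton_subset_iff.mpr hxC, Set.finite_singleton x, rfl⟩
      exact this (subset_closure rfl)
    obtain ⟨𝒰₀, h𝒰₀, hfin, hsub⟩ := h2 Cᶜ hC.isOpen_compl 𝒰 hop hint
    have hch : ∀ W ∈ 𝒰₀, ∃ F, F ⊆ C ∧ F.Finite ∧ W = (closure F)ᶜ := by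
      intro W hW
      obtain ⟨F, h1, h2, h3⟩ := h𝒰₀ hW
      exact ⟨F, h1, h2, h3⟩
    choose! f hfC hffin hfeq using hch
    refine ⟨⋃ W ∈ 𝒰₀, f W, hfin.biUnion hffin, ?_⟩
    apply subset_antisymm
    · intro x hxC
      have hx : x ∉ ⋂₀ 𝒰₀ := fun hx => hsub hx hxC
      simp only [Set.mem_sInter, not_forall] at hx
      obtain ⟨W, hW, hxW⟩ := hx
      rw [hfeq W hW] at hxW
      simp only [Set.mem_compl_iff, not_not] at hxW
      exact closure_mono (Set.subset_biUnion_of_mem hW) hxW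
    · apply closure_minimal _ hC
      intro x hx
      simp only [Set.mem_iUnion] at hx
      obtain ⟨W, hW, hx⟩ := hx
      exact hfC W hW hx
  tfae_have 5 → 4 := by
    intro h5 V hV 𝒮 hsat hsub
    obtain ⟨F, hFfin, hFC⟩ := h5 Vᶜ hV.isClosed_compl
    have hx : ∀ x ∈ F, ∃ S, S ∈ 𝒮 ∧ x ∉ S := by
      intro x hxF
      by_contra hcon
      push_neg at hcon
      have h1 : x ∈ ⋂₀ 𝒮 := fun S hS => hcon S hS
      have h2 : x ∈ V := hsub h1
      have h3 : x ∈ Vᶜ := hFC ▸ subset_closure hxF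
      exact h3 h2
    choose! S hS𝒮 hSx using hx
    refine ⟨S '' F, ?_, hFfin.image S, ?_⟩
    · rintro T ⟨x, hxF, rfl⟩
      exact hS𝒮 x hxF
    · intro y hy
      by_contra hyV
      have hyC : y ∈ closure F := hFC ▸ hyV
      obtain ⟨x, hxF, hycl⟩ := closure_finite_mem hFfin hyC
      have hyS : y ∈ S x := hy _ ⟨x, hxF, rfl⟩
      obtain ⟨U, hUo, hSU, hxU⟩ := saturated_sep (hsat _ (hS𝒮 x hxF)) (hSx x hxF)
      have : x ∈ U := by
        have := mem_closure_iff.mp hycl U hUo (hSU hyS)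
        simpa using this
      exact hxU this
  tfae_have 4 → 3 := by
    intro h4 V hV 𝒮 hne hsat hdir hsub
    obtain ⟨𝒮₀, h𝒮₀, hfin, hsub₀⟩ := h4 V hV 𝒮 hsat hsub
    obtain ⟨S, hS, hSsub⟩ := directed_lower hne hdir hfin h𝒮₀
    exact ⟨S, hS, hSsub.trans hsub₀⟩
  tfae_have 3 → 1 := by
    intro h3 V hV 𝒰 hne hop hdir hsub
    exact h3 V hV 𝒰 hne (fun U hU => isSaturated_of_isOpen (hop U hU)) hdir hsub
  tfae_finish
end

section
/- Every T0 co-Noetherian topological space is a strong R-space. -/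
theorem stmt9 {X : Type*} [TopologicalSpace X] [T0Space X]
    (h : IsCoNoetherian X) : IsStrongRSpace X := by
  intro 𝒦 h𝒦 U hU hsub
  obtain ⟨F, hFfin, hFeq⟩ := h Uᶜ hU.isClosed_compl
  have hFU : F ⊆ Uᶜ := hFeq ▸ subset_closure
  have hchoice : ∀ x ∈ F, ∃ K ∈ 𝒦, x ∉ K := by
    intro x hx
    by_contra hc
    push_neg at hc
    exact (hFU hx) (hsub fun K hK => hc K hK)
  choose! K hK1 hK2 using hchoice
  refine ⟨K '' F, ?_, hFfin.image K, ?_⟩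
  · rintro _ ⟨x, hx, rfl⟩; exact hK1 x hx
  · intro y hy
    by_contra hyU
    have hyC : y ∈ closure F := by
      have : y ∈ Uᶜ := hyU
      rwa [hFeq] at this
    have hclosed : IsClosed (⋃ x ∈ F, closure ({x} : Set X)) :=
      hFfin.isClosed_biUnion fun x _ => isClosed_closure
    have hsubF : F ⊆ ⋃ x ∈ F, closure ({x} : Set X) := fun z hz =>
      Set.mem_biUnion hz (subset_closure rfl)
    have hmem : y ∈ ⋃ x ∈ F, closure ({x} : Set X) :=
      closure_minimal hsubF hclosed hyC
    obtain ⟨x, hx, hyx⟩ := Set.mem_iUnion₂.mp hmem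
    have hyK : y ∈ K x := hy (K x) (Set.mem_image_of_mem K hx)
    have hsat := (h𝒦 (K x) (hK1 x hx)).2
    have hxK : x ∈ K x := by
      rw [hsat]
      intro V hV
      obtain ⟨hVopen, hKV⟩ := hV
      have hyV : y ∈ V := hKV (hsat ▸ hyK)
      obtain ⟨z, hzV, hz⟩ := mem_closure_iff.mp hyx V hVopen hyV
      rwa [hz] at hzV
    exact hK2 x hx hxK
end

section
/- Let P be a dcpo that has no infinite antichain. Then P endowed with the Scott topology is a co-Noetherian space. -/
theorem stmt11 {P : Type*} [PartialOrder P]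
    (hdcpo : ∀ D : Set P, D.Nonempty → DirectedOn (· ≤ ·) D → ∃ a : P, IsLUB D a)
    (hac : ∀ A : Set P, IsAntichain (· ≤ ·) A → A.Finite) :
    @IsCoNoetherian P (Topology.scott P Set.univ) := by
  letI := Topology.scott P Set.univ
  haveI : Topology.IsScott P Set.univ := ⟨rfl⟩
  intro C hC
  have hlow := Topology.IsScott.isLowerSet_of_isClosed hC
  have hdsc := Topology.IsScott.dirSupClosed_of_isClosed hC
  set M : Set P := {m | Maximal (· ∈ C) m} with hM
  have hMa : IsAntichain (· ≤ ·) M := by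
    intro m hm n hn hne hmn
    exact hne (le_antisymm hmn (hm.2 hn.1 hmn))
  have hsub : ∀ x ∈ C, ∃ m ∈ M, x ≤ m := by
    intro x hx
    obtain ⟨m, hxm, hm⟩ := zorn_le_nonempty₀ C (fun c hcC hchain y hy => by
      obtain ⟨a, ha⟩ := hdcpo c ⟨y, hy⟩ hchain.directedOn
      exact ⟨a, hdsc hcC ⟨y, hy⟩ hchain.directedOn ha, fun z hz => ha.1 hz⟩) x hx
    exact ⟨m, hm, hxm⟩
  refine ⟨M, hac M hMa, le_antisymm ?_ ?_⟩
  · intro x hx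
    obtain ⟨m, hm, hxm⟩ := hsub x hx
    have : x ∈ closure {m} := by
      rw [Topology.IsScott.closure_singleton]; exact hxm
    exact closure_mono (Set.singleton_subset_iff.2 hm) this
  · exact closure_minimal (fun m hm => hm.1) hC
end

section
/- Let (X, τ) be a topological space and τ^s the strong (Skula) topology of τ. Then (X, τ^s) is compact if and only if (X, τ) is both a Noetherian space and a co-Noetherian space. -/
section Aux
variable {X : Type*} [TopologicalSpace X]

lemma skula_open_of_open {U : Set X} (h : IsOpen U) : @IsOpen X (skulaTop X) U :=
  TopologicalSpace.GenerateOpen.basic _ (Or.inl h)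

lemma skula_open_of_closed {C : Set X} (h : IsClosed C) : @IsOpen X (skulaTop X) C :=
  TopologicalSpace.GenerateOpen.basic _ (Or.inr h)

end Aux

theorem stmt12 {X : Type*} [TopologicalSpace X] :
    @CompactSpace X (skulaTop X) ↔
      ((∀ U : Set X, IsOpen U → IsCompact U) ∧ IsCoNoetherian X) := by
  constructor
  · intro hc
    have huniv : @IsCompact X (skulaTop X) Set.univ := @isCompact_univ _ (skulaTop X) hc
    constructor
    · -- Noetherian
      intro U hU
      apply isCompact_of_finite_subcover
      intro ι V hV hcover
      set W : Option ι → Set X := fun o => o.elim Uᶜ V with hW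
      have hWopen : ∀ o, @IsOpen X (skulaTop X) (W o) := by
        rintro (_ | i)
        · exact skula_open_of_closed hU.isClosed_compl
        · exact skula_open_of_open (hV i)
      have hcov2 : Set.univ ⊆ ⋃ o, W o := by
        intro x _
        by_cases hx : x ∈ U
        · obtain ⟨_, ⟨i, rfl⟩, hxi⟩ := hcover hx
          exact Set.mem_iUnion.2 ⟨some i, hxi⟩
        · exact Set.mem_iUnion.2 ⟨none, hx⟩
      obtain ⟨t, ht⟩ := @IsCompact.elim_finite_subcover X (skulaTop X) Set.univ _ huniv W hWopen hcov2
      refine ⟨t.eraseNone, fun x hx => ?_⟩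
      obtain ⟨_, ⟨o, rfl⟩, _, ⟨ho, rfl⟩, hxo⟩ := ht (Set.mem_univ x)
      match o with
      | none => exact absurd hx hxo
      | some i =>
        exact Set.mem_biUnion (Finset.mem_eraseNone.2 ho) hxo
    · -- co-Noetherian
      intro C hC
      have hCs : @IsCompact X (skulaTop X) C := by
        have hcl : @IsClosed X (skulaTop X) C :=
          @isOpen_compl_iff X C (skulaTop X) |>.mp (skula_open_of_open hC.isOpen_compl)
        exact @IsClosed.isCompact X (skulaTop X) C hc hcl
      have hcov : C ⊆ ⋃ x : C, closure {(x : X)} := fun x hx =>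
        Set.mem_iUnion.2 ⟨⟨x, hx⟩, subset_closure rfl⟩
      obtain ⟨t, ht⟩ := @IsCompact.elim_finite_subcover X (skulaTop X) C _ hCs
        (fun x : C => closure {(x : X)}) (fun x => skula_open_of_closed isClosed_closure) hcov
      refine ⟨Subtype.val '' (t : Set C), (t.finite_toSet.image _), ?_⟩
      apply subset_antisymm
      · intro x hx
        obtain ⟨_, ⟨i, rfl⟩, _, ⟨hi, rfl⟩, hxi⟩ := ht hx
        exact closure_mono (Set.singleton_subset_iff.2 (Set.mem_image_of_mem Subtype.val (Finset.mem_coe.2 hi))) hxi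
      · refine closure_minimal ?_ hC
        rintro x ⟨i, _, rfl⟩; exact i.2
  · rintro ⟨hNoeth, hCoNoeth⟩
    refine @CompactSpace.mk X (skulaTop X) ?_
    rw [@isCompact_iff_ultrafilter_le_nhds X (skulaTop X)]
    intro f _
    set 𝒞 : Set (Set X) := {C | IsClosed C ∧ C ∈ f} with h𝒞
    set C₀ : Set X := ⋂₀ 𝒞 with hC₀
    have hC₀closed : IsClosed C₀ := isClosed_sInter fun C hC => hC.1
    have hC₀mem : C₀ ∈ f := by
      have hcomp : IsCompact C₀ᶜ := hNoeth _ hC₀closed.isOpen_compl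
      have hcov : C₀ᶜ ⊆ ⋃ C : 𝒞, (C : Set X)ᶜ := by
        intro x hx
        rw [Set.mem_compl_iff, hC₀, Set.mem_sInter] at hx
        push_neg at hx
        obtain ⟨C, hC, hxC⟩ := hx
        exact Set.mem_iUnion.2 ⟨⟨C, hC⟩, hxC⟩
      obtain ⟨t, ht⟩ := hcomp.elim_finite_subcover (fun C : 𝒞 => (C : Set X)ᶜ)
        (fun C => C.2.1.isOpen_compl) hcov
      have hD : (⋂ C ∈ t, (C : Set X)) ∈ f :=
        (Filter.biInter_mem t.finite_toSet).2 fun C _ => C.2.2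
      refine Filter.mem_of_superset hD ?_
      intro x hx C hC
      by_contra hxC
      have : x ∈ C₀ᶜ := fun hx0 => hxC (hx0 C hC)
      obtain ⟨_, ⟨D, rfl⟩, _, ⟨hD', rfl⟩, hxD⟩ := ht this
      exact hxD (Set.mem_iInter₂.1 hx D hD')
    obtain ⟨F, hFfin, hFeq⟩ := hCoNoeth C₀ hC₀closed
    have hsub : C₀ ⊆ ⋃ x ∈ F, closure {x} := by
      rw [hFeq]
      refine closure_minimal (fun x hx => Set.mem_biUnion hx (subset_closure rfl)) ?_
      exact hFfin.isClosed_biUnion fun x _ => isClosed_closure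
    have : (⋃ x ∈ F, closure {x}) ∈ f := Filter.mem_of_superset hC₀mem hsub
    obtain ⟨x, hxF, hxmem⟩ := (Ultrafilter.finite_biUnion_mem_iff hFfin).1 this
    refine ⟨x, Set.mem_univ x, ?_⟩
    rw [skulaTop, TopologicalSpace.nhds_generateFrom]
    refine le_iInf₂ fun s hs => ?_
    rw [Filter.le_principal_iff]
    obtain ⟨hxs, hs | hs⟩ := hs
    · -- s open
      by_contra hns
      have hsc : sᶜ ∈ f := (Ultrafilter.compl_mem_iff_notMem).2 hns
      have : C₀ ⊆ sᶜ := Set.sInter_subset_of_mem ⟨hs.isClosed_compl, hsc⟩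
      have hxC₀ : x ∈ C₀ := by rw [hFeq]; exact subset_closure hxF
      exact this hxC₀ hxs
    · -- s closed
      exact Filter.mem_of_superset hxmem
        (closure_minimal (Set.singleton_subset_iff.2 hxs) hs)
end

section
/- Let (X, τ) be a T0 Noetherian topological space. Then X is co-Noetherian if and only if X is open well-filtered. -/
open TopologicalSpace in
lemma stmt13_wayBelow {Y : Type*} [TopologicalSpace Y] [NoetherianSpace Y]
    {V W : Set Y} (h : V ⊆ W) : wayBelowOpen V W := by
  intro 𝒞 h𝒞 hcov
  rcases (NoetherianSpace.isCompact V).elim_finite_subcover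
      (fun i : 𝒞 => (i : Set Y)) (fun i => h𝒞 i i.2)
      (by rw [← Set.sUnion_eq_iUnion]; exact h.trans hcov) with ⟨t, ht⟩
  refine ⟨Subtype.val '' (t : Set 𝒞), ?_, (t.finite_toSet.image _), ?_⟩
  · rintro _ ⟨i, -, rfl⟩; exact i.2
  · intro x hx
    rcases Set.mem_iUnion₂.1 (ht hx) with ⟨i, hi, hxi⟩
    exact ⟨i, ⟨i, hi, rfl⟩, hxi⟩

lemma stmt13_subset_of_wayBelow {Y : Type*} [TopologicalSpace Y]
    {V W : Set Y} (hW : IsOpen W) (h : wayBelowOpen V W) : V ⊆ W := by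
  rcases h {W} (by simpa using hW) (by simp) with ⟨𝒟, h𝒟, -, hsub⟩
  refine hsub.trans ?_
  intro x hx
  rcases hx with ⟨D, hD, hxD⟩
  rcases h𝒟 hD with rfl
  exact hxD

theorem stmt13 {X : Type*} [TopologicalSpace X] [T0Space X]
    (hNoeth : ∀ U : Set X, IsOpen U → IsCompact U) :
    IsCoNoetherian X ↔ IsOpenWellFiltered X := by
  haveI hNS : TopologicalSpace.NoetherianSpace X :=
    (TopologicalSpace.noetherianSpace_iff_opens X).mpr fun s => hNoeth s s.2
  constructor
  · -- co-Noetherian → open well-filtered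
    intro hCN ℱ hne hopen hfil U hU hsub
    by_contra hcon
    push_neg at hcon
    obtain ⟨F, hFfin, hFeq⟩ := hCN Uᶜ hU.isClosed_compl
    -- every member of ℱ meets F
    have hmeet : ∀ V ∈ ℱ, (F ∩ V).Nonempty := by
      intro V hV
      by_contra hempty
      rw [Set.not_nonempty_iff_eq_empty] at hempty
      have hFV : F ⊆ Vᶜ := by
        intro x hx
        intro hxV
        exact Set.eq_empty_iff_forall_notMem.1 hempty x ⟨hx, hxV⟩
      have : Uᶜ ⊆ Vᶜ := by
        rw [hFeq]
        exact closure_minimal hFV (hopen V hV).isClosed_compl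
      have : V ⊆ U := by
        intro x hxV
        by_contra hxU
        exact this hxU hxV
      exact hcon V hV this
    -- filtered under ⊆
    have hfil' : ∀ V₁ ∈ ℱ, ∀ V₂ ∈ ℱ, ∃ V₃ ∈ ℱ, V₃ ⊆ V₁ ∩ V₂ := by
      intro V₁ h₁ V₂ h₂
      obtain ⟨V₃, h₃, hw₁, hw₂⟩ := hfil V₁ h₁ V₂ h₂
      exact ⟨V₃, h₃, Set.subset_inter
        (stmt13_subset_of_wayBelow (hopen V₁ h₁) hw₁)
        (stmt13_subset_of_wayBelow (hopen V₂ h₂) hw₂)⟩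
    -- the traces on F
    set S : Set (Set X) := (fun V => F ∩ V) '' ℱ with hS
    have hSfin : S.Finite := Set.Finite.subset hFfin.finite_subsets
      (by rintro _ ⟨V, -, rfl⟩; exact Set.inter_subset_left)
    have hSne : S.Nonempty := hne.image _
    obtain ⟨M, hMS, hMmin0⟩ := hSfin.exists_minimal hSne
    have hMmin : ∀ a' ∈ S, a' ≤ M → M = a' := fun a' ha' hle => le_antisymm (hMmin0 ha' hle) hle
    obtain ⟨V₀, hV₀, rfl⟩ := hMS
    obtain ⟨x, hxM⟩ := hmeet V₀ hV₀
    have hxall : ∀ V ∈ ℱ, x ∈ V := by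
      intro V hV
      obtain ⟨W, hW, hWsub⟩ := hfil' V₀ hV₀ V hV
      have h1 : F ∩ W ⊆ F ∩ V₀ :=
        Set.inter_subset_inter_right F (hWsub.trans Set.inter_subset_left)
      have h2 : F ∩ V₀ = F ∩ W := hMmin (F ∩ W) ⟨W, hW, rfl⟩ h1
      have hxW : x ∈ F ∩ W := h2 ▸ hxM
      exact (hWsub hxW.2).2
    have hxU : x ∈ U := hsub fun V hV => hxall V hV
    have hxUc : x ∈ Uᶜ := hFeq ▸ subset_closure hxM.1
    exact hxUc hxU
  · -- open well-filtered → co-Noetherian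
    intro hOWF C hC
    obtain ⟨S, hSfin, hScl, hSirr, rfl⟩ :=
      TopologicalSpace.NoetherianSpace.exists_finite_set_isClosed_irreducible hC
    have hgen : ∀ t ∈ S, ∃ x : X, t = closure {x} := by
      intro t ht
      by_contra hng
      push_neg at hng
      set ℱ : Set (Set X) := {V : Set X | IsOpen V ∧ (V ∩ t).Nonempty} with hℱ
      have htne : t.Nonempty := (hSirr t ht).1
      have hne : ℱ.Nonempty := ⟨Set.univ, isOpen_univ, by simpa using htne⟩
      have hopen : ∀ W ∈ ℱ, IsOpen W := fun W hW => hW.1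
      have hfil : ∀ U₁ ∈ ℱ, ∀ U₂ ∈ ℱ, ∃ U₃ ∈ ℱ,
          wayBelowOpen U₃ U₁ ∧ wayBelowOpen U₃ U₂ := by
        intro U₁ h₁ U₂ h₂
        have hint : ((U₁ ∩ U₂) ∩ t).Nonempty := by
          rcases (hSirr t ht).2 U₁ U₂ h₁.1 h₂.1
            (by rcases h₁.2 with ⟨y, hy⟩; exact ⟨y, hy.2, hy.1⟩)
            (by rcases h₂.2 with ⟨y, hy⟩; exact ⟨y, hy.2, hy.1⟩) with ⟨y, hyt, hy1, hy2⟩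
          exact ⟨y, ⟨hy1, hy2⟩, hyt⟩
        exact ⟨U₁ ∩ U₂, ⟨h₁.1.inter h₂.1, hint⟩,
          stmt13_wayBelow Set.inter_subset_left,
          stmt13_wayBelow Set.inter_subset_right⟩
      have hinter : ⋂₀ ℱ ⊆ tᶜ := by
        intro x hx hxt
        have hVx : (closure {x})ᶜ ∈ ℱ := by
          refine ⟨isClosed_closure.isOpen_compl, ?_⟩
          have hsubt : closure {x} ⊆ t :=
            closure_minimal (Set.singleton_subset_iff.2 hxt) (hScl t ht)
          have hne' : (t \ closure {x}).Nonempty := by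
            rw [Set.diff_nonempty]
            intro hts
            exact hng x (le_antisymm hts hsubt)
          rcases hne' with ⟨y, hy⟩
          exact ⟨y, hy.2, hy.1⟩
        exact (hx _ hVx) (subset_closure rfl)
      obtain ⟨V, hVℱ, hVsub⟩ := hOWF ℱ hne hopen hfil tᶜ (hScl t ht).isOpen_compl hinter
      rcases hVℱ.2 with ⟨y, hyV, hyt⟩
      exact hVsub hyV hyt
    haveI := hSfin.to_subtype
    choose g hg using fun t : S => hgen t t.2
    refine ⟨Set.range g, Set.finite_range g, ?_⟩
    have himg : Set.range g = ⋃ t : S, {g t} := by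
      ext y; simp [eq_comm]
    calc ⋃₀ S = ⋃ t : S, (t : Set X) := Set.sUnion_eq_iUnion
      _ = ⋃ t : S, closure {g t} := Set.iUnion_congr hg
      _ = closure (⋃ t : S, {g t}) := (closure_iUnion_of_finite _).symm
      _ = closure (Set.range g) := by rw [himg]
end

section
/- Let (X, τ) be a T0 topological space and τ^s the strong (Skula) topology of τ. Then (X, τ^s) is compact if and only if (X, τ) is both a Noetherian space and a well-filtered space. -/
open Set TopologicalSpace Topology

set_option linter.unusedSectionVars false

section Aux

variable {X : Type*} [TopologicalSpace X]

lemma skula_isOpen_of_isOpen {U : Set X} (h : IsOpen U) : IsOpen[skulaTop X] U :=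
  TopologicalSpace.isOpen_generateFrom_of_mem (Or.inl h)

lemma skula_isOpen_of_isClosed {C : Set X} (h : IsClosed C) : IsOpen[skulaTop X] C :=
  TopologicalSpace.isOpen_generateFrom_of_mem (Or.inr h)

lemma skula_isClosed_of_isOpen {U : Set X} (h : IsOpen U) : IsClosed[skulaTop X] U :=
  @IsClosed.mk X (skulaTop X) U (skula_isOpen_of_isClosed h.isClosed_compl)

lemma skula_isClosed_of_isClosed {C : Set X} (h : IsClosed C) : IsClosed[skulaTop X] C :=
  @IsClosed.mk X (skulaTop X) C (skula_isOpen_of_isOpen h.isOpen_compl)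

lemma isSaturatedSet_of_isOpen {U : Set X} (h : IsOpen U) : IsSaturatedSet U := by
  apply subset_antisymm
  · exact fun x hx V hV => hV.2 hx
  · exact sInter_subset_of_mem ⟨h, subset_rfl⟩

lemma skula_isClosed_of_isSaturatedSet {K : Set X} (h : IsSaturatedSet K) :
    IsClosed[skulaTop X] K := by
  rw [h]
  exact @isClosed_sInter X (skulaTop X) _ fun U hU => skula_isClosed_of_isOpen hU.1

/-- From a binary-filtered family, extract a lower bound of any finite subfamily. -/
lemma exists_subset_of_filtered {𝒞 : Set (Set X)} (hne : 𝒞.Nonempty)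
    (hfil : ∀ A ∈ 𝒞, ∀ B ∈ 𝒞, ∃ C ∈ 𝒞, C ⊆ A ∩ B) :
    ∀ t : Finset (Set X), ↑t ⊆ 𝒞 → ∃ K ∈ 𝒞, ∀ A ∈ t, K ⊆ A := by
  classical
  intro t
  induction t using Finset.induction_on with
  | empty => exact fun _ => ⟨hne.choose, hne.choose_spec, by simp⟩
  | @insert A s hA ih =>
    intro hsub
    obtain ⟨K, hK, hKs⟩ := ih fun x hx => hsub (Finset.mem_coe.mpr (Finset.mem_insert_of_mem hx))
    have hA𝒞 : A ∈ 𝒞 := hsub (Finset.mem_insert_self A s)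
    obtain ⟨C, hC, hCsub⟩ := hfil A hA𝒞 K hK
    refine ⟨C, hC, fun B hB => ?_⟩
    rcases Finset.mem_insert.mp hB with rfl | hB
    · exact hCsub.trans inter_subset_left
    · exact (hCsub.trans inter_subset_right).trans (hKs B hB)

/-- A Noetherian well-filtered space is sober. -/
lemma sober_of_noetherian_wf (hN : ∀ U : Set X, IsOpen U → IsCompact U)
    (hWF : IsWellFilteredSpace X) {A : Set X} (hA : IsClosed A) (hirr : IsIrreducible A) :
    ∃ x, A = closure {x} := by
  set 𝒞 : Set (Set X) := {U : Set X | IsOpen U ∧ (U ∩ A).Nonempty} with h𝒞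
  have hne : 𝒞.Nonempty := ⟨univ, isOpen_univ, by simpa using hirr.1⟩
  have hcs : ∀ K ∈ 𝒞, IsCompact K ∧ IsSaturatedSet K :=
    fun K hK => ⟨hN K hK.1, isSaturatedSet_of_isOpen hK.1⟩
  have hfil : ∀ U ∈ 𝒞, ∀ V ∈ 𝒞, ∃ W ∈ 𝒞, W ⊆ U ∩ V := by
    intro U hU V hV
    have h1 : (A ∩ (U ∩ V)).Nonempty := hirr.2 U V hU.1 hV.1
      (by rw [inter_comm]; exact hU.2) (by rw [inter_comm]; exact hV.2)
    exact ⟨U ∩ V, ⟨hU.1.inter hV.1, by rwa [inter_comm]⟩, subset_rfl⟩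
  have hnotsub : ¬ ⋂₀ 𝒞 ⊆ Aᶜ := by
    intro hsub
    obtain ⟨U, hU, hUsub⟩ := hWF 𝒞 hne hcs hfil Aᶜ hA.isOpen_compl hsub
    obtain ⟨y, hyU, hyA⟩ := hU.2
    exact hUsub hyU hyA
  obtain ⟨x, hx𝒞, hxA⟩ := not_subset.mp hnotsub
  rw [notMem_compl_iff] at hxA
  refine ⟨x, subset_antisymm ?_ (closure_minimal (singleton_subset_iff.2 hxA) hA)⟩
  intro a ha
  by_contra hacl
  have hV : (closure {x})ᶜ ∈ 𝒞 := ⟨isClosed_closure.isOpen_compl, ⟨a, hacl, ha⟩⟩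
  exact (hx𝒞 _ hV) (subset_closure rfl)

end Aux

theorem stmt14 {X : Type*} [TopologicalSpace X] [T0Space X] :
    @CompactSpace X (skulaTop X) ↔
      ((∀ U : Set X, IsOpen U → IsCompact U) ∧ IsWellFilteredSpace X) := by
  constructor
  · intro h
    have hcompU : @IsCompact X (skulaTop X) univ := @isCompact_univ X (skulaTop X) h
    constructor
    · -- Noetherian
      intro U hU
      rw [isCompact_iff_finite_subcover]
      intro ι V hV hcover
      have hcU : @IsCompact X (skulaTop X) U :=
        @IsCompact.of_isClosed_subset X (skulaTop X) _ _ hcompU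
          (skula_isClosed_of_isOpen hU) (subset_univ U)
      exact @IsCompact.elim_finite_subcover X (skulaTop X) U ι hcU V
        (fun i => skula_isOpen_of_isOpen (hV i)) hcover
    · -- well-filtered
      intro 𝒞 hne hcs hfil U hUopen hsub
      classical
      haveI : Nonempty ↥𝒞 := hne.to_subtype
      set Z : ↥𝒞 → Set X := fun K => K.1 ∩ Uᶜ with hZ
      have hZclosed : ∀ K : ↥𝒞, IsClosed[skulaTop X] (Z K) := by
        intro K
        exact @IsClosed.inter X _ _ (skulaTop X)
          (skula_isClosed_of_isSaturatedSet (hcs K.1 K.2).2)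
          (skula_isClosed_of_isClosed (isClosed_compl_iff.mpr hUopen))
      have hempty : (univ ∩ ⋂ K : ↥𝒞, Z K) = ∅ := by
        rw [univ_inter, hZ, ← iInter_inter, eq_empty_iff_forall_notMem]
        rintro x ⟨hx1, hx2⟩
        exact hx2 (hsub (mem_sInter.mpr fun t ht => mem_iInter.mp hx1 ⟨t, ht⟩))
      obtain ⟨t, ht⟩ := @IsCompact.elim_finite_subfamily_closed X (skulaTop X) univ ↥𝒞
        hcompU Z hZclosed hempty
      obtain ⟨K₀, hK₀, hK₀sub⟩ := exists_subset_of_filtered hne hfil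
        (t.image Subtype.val) (by
          intro x hx
          simp only [Finset.coe_image, mem_image, Finset.mem_coe] at hx
          obtain ⟨K, _, rfl⟩ := hx
          exact K.2)
      refine ⟨K₀, hK₀, fun x hx => ?_⟩
      by_contra hxU
      have : x ∈ univ ∩ ⋂ K ∈ t, Z K := by
        refine ⟨mem_univ x, ?_⟩
        simp only [mem_iInter]
        intro K hK
        exact ⟨hK₀sub K.1 (Finset.mem_image_of_mem Subtype.val hK) hx, hxU⟩
      rw [ht] at this
      exact this
  · rintro ⟨hN, hWF⟩
    haveI hNoeth : NoetherianSpace X :=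
      (noetherianSpace_iff_opens X).mpr fun s => hN s s.2
    refine @CompactSpace.mk X (skulaTop X) ?_
    rw [@isCompact_iff_ultrafilter_le_nhds X (skulaTop X)]
    intro f _
    -- the minimal closed set belonging to f
    have h𝒮ne : {C : Closeds X | (C : Set X) ∈ f}.Nonempty :=
      ⟨⊤, by simp only [Set.mem_setOf_eq, Closeds.coe_top]; exact Filter.univ_mem⟩
    obtain ⟨A, hAf, hAmin⟩ :=
      (wellFounded_lt (α := Closeds X)).has_min {C : Closeds X | (C : Set X) ∈ f} h𝒮ne
    have hmono : ∀ D : Set X, IsClosed D → D ∈ f → (A : Set X) ⊆ D := by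
      intro D hD hDf
      have hinf : ((A ⊓ ⟨D, hD⟩ : Closeds X) : Set X) ∈ f := by
        rw [Closeds.coe_inf]; exact Filter.inter_mem hAf hDf
      have hle : (A ⊓ ⟨D, hD⟩ : Closeds X) ≤ A := inf_le_left
      have heq : (A ⊓ ⟨D, hD⟩ : Closeds X) = A := by
        by_contra hne
        exact hAmin _ hinf (lt_of_le_of_ne hle hne)
      calc (A : Set X) = ((A ⊓ ⟨D, hD⟩ : Closeds X) : Set X) := by rw [heq]
        _ ⊆ D := by rw [Closeds.coe_inf]; exact inter_subset_right
    have hirr : IsIrreducible (A : Set X) := by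
      refine ⟨f.nonempty_of_mem hAf, ?_⟩
      intro u v hu hv hAu hAv
      by_contra hcon
      have hsub : (A : Set X) ⊆ uᶜ ∪ vᶜ := by
        intro x hx
        by_contra hx'
        simp only [mem_union, mem_compl_iff, not_or, not_not] at hx'
        exact hcon ⟨x, hx, hx'.1, hx'.2⟩
      have : uᶜ ∪ vᶜ ∈ f := Filter.mem_of_superset hAf hsub
      rcases Ultrafilter.union_mem_iff.mp this with hm | hm
      · obtain ⟨a, haA, hau⟩ := hAu
        exact hmono uᶜ hu.isClosed_compl hm haA hau
      · obtain ⟨b, hbA, hbv⟩ := hAv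
        exact hmono vᶜ hv.isClosed_compl hm hbA hbv
    obtain ⟨x, hxgen⟩ := sober_of_noetherian_wf hN hWF A.isClosed hirr
    have hxA : x ∈ (A : Set X) := by rw [hxgen]; exact subset_closure rfl
    refine ⟨x, mem_univ x, ?_⟩
    show (f : Filter X) ≤ @nhds X (TopologicalSpace.generateFrom
      ({U : Set X | IsOpen U} ∪ {C : Set X | IsClosed C})) x
    rw [TopologicalSpace.nhds_generateFrom]
    refine le_iInf₂ fun s hs => ?_
    rw [Filter.le_principal_iff]
    obtain ⟨hxs, hsO | hsC⟩ := hs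
    · -- s is open
      by_contra hsf
      have : sᶜ ∈ f := Ultrafilter.compl_mem_iff_notMem.mpr hsf
      exact hmono sᶜ hsO.isClosed_compl this hxA hxs
    · -- s is closed
      have : (A : Set X) ⊆ s := by
        rw [hxgen]
        exact closure_minimal (singleton_subset_iff.2 hxs) hsC
      exact Filter.mem_of_superset hAf this
end

section
/- Let X be a co-Noetherian topological space, A a saturated subset of X, and C a closed subset of X. Then both A and C, endowed with the subspace topology, are co-Noetherian spaces. -/
lemma closure_finite_eq {X : Type*} [TopologicalSpace X] {F : Set X} (hF : F.Finite) :
    closure F = ⋃ a ∈ F, closure {a} := by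
  apply subset_antisymm
  · exact closure_minimal (fun x hx => Set.mem_biUnion hx (subset_closure rfl))
      (hF.isClosed_biUnion fun _ _ => isClosed_closure)
  · exact Set.iUnion₂_subset fun a ha => closure_mono (Set.singleton_subset_iff.2 ha)

lemma sat_upper {X : Type*} [TopologicalSpace X] {A : Set X} (hA : IsSaturatedSet A)
    {x y : X} (hx : x ∈ A) (hxy : x ∈ closure ({y} : Set X)) : y ∈ A := by
  rw [hA]
  rintro U ⟨hU, hAU⟩
  have hxU : x ∈ U := by rw [hA] at hx; exact hx U ⟨hU, hAU⟩
  rcases mem_closure_iff.1 hxy U hU hxU with ⟨z, hzU, hz⟩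
  rwa [Set.mem_singleton_iff.1 hz] at hzU

lemma subtype_coNoeth {X : Type*} [TopologicalSpace X] (hX : IsCoNoetherian X)
    {A : Set X} (hup : ∀ x y : X, x ∈ A → x ∈ closure ({y} : Set X) → y ∈ A) :
    IsCoNoetherian A := by
  intro E hE
  rcases isClosed_induced_iff.1 hE with ⟨D, hD, rfl⟩
  rcases hX D hD with ⟨G, hGfin, hGD⟩
  refine ⟨((↑) : A → X) ⁻¹' (G ∩ A), ((hGfin.inter_of_left A).preimage
    (Subtype.coe_injective.injOn)), ?_⟩
  ext x
  rw [closure_subtype, Subtype.image_preimage_coe]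
  have him : A ∩ (G ∩ A) = G ∩ A := by
    ext z; constructor
    · rintro ⟨_, h⟩; exact h
    · rintro ⟨h1, h2⟩; exact ⟨h2, h1, h2⟩
  rw [him]
  constructor
  · intro hx
    have hxD : (x : X) ∈ closure G := hGD ▸ hx
    rcases Set.mem_iUnion₂.1 ((closure_finite_eq hGfin) ▸ hxD) with ⟨a, ha, hxa⟩
    have haA : a ∈ A := hup x a x.2 hxa
    exact (closure_mono (Set.singleton_subset_iff.2 (show a ∈ G ∩ A from ⟨ha, haA⟩))) hxa
  · intro hx
    have : (x : X) ∈ closure G := closure_mono Set.inter_subset_left hx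
    simpa [Set.mem_preimage, ← hGD] using this

lemma closed_coNoeth {X : Type*} [TopologicalSpace X] (hX : IsCoNoetherian X)
    {C : Set X} (hC : IsClosed C) : IsCoNoetherian C := by
  intro E hE
  rcases isClosed_induced_iff.1 hE with ⟨D, hD, rfl⟩
  rcases hX (D ∩ C) (hD.inter hC) with ⟨G, hGfin, hGD⟩
  have hGsub : G ⊆ D ∩ C := hGD ▸ subset_closure
  refine ⟨((↑) : C → X) ⁻¹' G, hGfin.preimage (Subtype.coe_injective.injOn), ?_⟩
  ext x
  rw [closure_subtype, Subtype.image_preimage_coe,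
    Set.inter_eq_self_of_subset_right (hGsub.trans Set.inter_subset_right), ← hGD]
  exact ⟨fun h => ⟨h, x.2⟩, fun h => h.1⟩

theorem stmt17 {X : Type*} [TopologicalSpace X] (hX : IsCoNoetherian X)
    (A C : Set X) (hA : IsSaturatedSet A) (hC : IsClosed C) :
    IsCoNoetherian A ∧ IsCoNoetherian C :=
  ⟨subtype_coNoeth hX (fun x y hx hxy => sat_upper hA hx hxy), closed_coNoeth hX hC⟩
end

section
/- Let L be a controllable dcpo. Then L endowed with the upper topology υ(L) is a co-Noetherian space. -/
lemma lowerCloSet_eq_lowerClosure {L : Type*} [Preorder L] (A : Set L) :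
    lowerCloSet A = ↑(lowerClosure A) := by
  ext x; simp [lowerCloSet]

/-- A directed set contained in the lower closure of a finite set is cofinally below one of
the elements of that finite set. -/
lemma cofinal_of_subset_lowerClo {L : Type*} [Preorder L] {G : Set L} (hG : G.Finite) :
    ∀ D : Set L, D.Nonempty → DirectedOn (· ≤ ·) D → D ⊆ lowerCloSet G →
      ∃ g ∈ G, ∀ d ∈ D, ∃ e ∈ D, d ≤ e ∧ e ≤ g := by
  induction G, hG using Set.Finite.induction_on with
  | empty =>
    rintro D ⟨x, hx⟩ _ hsub
    obtain ⟨a, ha, -⟩ := hsub hx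
    exact absurd ha (Set.notMem_empty a)
  | insert haG hGfin ih =>
    rename_i a G
    intro D hne hdir hsub
    by_cases hcof : ∀ d ∈ D, ∃ e ∈ D, d ≤ e ∧ e ≤ a
    · exact ⟨a, Set.mem_insert a G, hcof⟩
    · push_neg at hcof
      obtain ⟨d0, hd0, hd0a⟩ := hcof
      set D' : Set L := {e ∈ D | d0 ≤ e} with hD'
      have hD'ne : D'.Nonempty := ⟨d0, hd0, le_refl d0⟩
      have hD'dir : DirectedOn (· ≤ ·) D' := by
        rintro x ⟨hxD, hx0⟩ y ⟨hyD, hy0⟩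
        obtain ⟨z, hzD, hxz, hyz⟩ := hdir x hxD y hyD
        exact ⟨z, ⟨hzD, hx0.trans hxz⟩, hxz, hyz⟩
      have hD'sub : D' ⊆ lowerCloSet G := by
        rintro e ⟨heD, h0e⟩
        obtain ⟨b, hb, heb⟩ := hsub heD
        rcases hb with rfl | hbG
        · exact absurd heb (hd0a e heD h0e)
        · exact ⟨b, hbG, heb⟩
      obtain ⟨g, hgG, hg⟩ := ih D' hD'ne hD'dir hD'sub
      refine ⟨g, Set.mem_insert_of_mem a hgG, fun d hd => ?_⟩
      obtain ⟨e, heD, hde, h0e⟩ := hdir d hd d0 hd0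
      obtain ⟨e', he'D', hee', he'g⟩ := hg e ⟨heD, h0e⟩
      exact ⟨e', he'D'.1, hde.trans hee', he'g⟩

theorem stmt18 {L : Type*} [PartialOrder L]
    (hdcpo : ∀ D : Set L, D.Nonempty → DirectedOn (· ≤ ·) D → ∃ a : L, IsLUB D a)
    (hctrl : ∀ C : Set L, IsAntichain (· ≤ ·) C → ∃ F : Set L, IsCoverOf F C) :
    @IsCoNoetherian L (Topology.upper L) := by
  letI : TopologicalSpace L := Topology.upper L
  haveI : Topology.IsUpper L := ⟨rfl⟩
  intro C hC
  -- separation of points outside a closed set by lower closures of finite sets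
  have hsep : ∀ y ∉ C, ∃ G : Set L, G.Finite ∧ C ⊆ lowerCloSet G ∧ y ∉ lowerCloSet G := by
    intro y hy
    obtain ⟨s, hsb, hys, hsC⟩ :=
      (Topology.IsUpper.isTopologicalBasis (α := L)).exists_subset_of_mem_open hy
        hC.isOpen_compl
    obtain ⟨t, ht, rfl⟩ := hsb
    refine ⟨t, ht, fun x hx => ?_, ?_⟩
    · by_contra h
      rw [lowerCloSet_eq_lowerClosure] at h
      exact hsC h hx
    · rw [lowerCloSet_eq_lowerClosure]
      simpa using hys
  -- C is closed under directed suprema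
  have hdc : ∀ D : Set L, D.Nonempty → DirectedOn (· ≤ ·) D → D ⊆ C →
      ∀ a : L, IsLUB D a → a ∈ C := by
    intro D hne hdir hDC a ha
    by_contra haC
    obtain ⟨G, hGfin, hCG, haG⟩ := hsep a haC
    obtain ⟨g, hgG, hg⟩ :=
      cofinal_of_subset_lowerClo hGfin D hne hdir (fun d hd => hCG (hDC hd))
    have hub : g ∈ upperBounds D := fun d hd => by
      obtain ⟨e, -, hde, heg⟩ := hg d hd
      exact hde.trans heg
    exact haG ⟨g, hgG, ha.2 hub⟩
  -- every element of C lies below a maximal element of C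
  set M : Set L := {x | Maximal (· ∈ C) x} with hM
  have hmax : ∀ x ∈ C, ∃ m ∈ M, x ≤ m := by
    intro x hx
    have hchain : ∀ c ⊆ C, IsChain (· ≤ ·) c → ∀ y ∈ c, ∃ ub ∈ C, ∀ z ∈ c, z ≤ ub := by
      intro c hcC hc y hy
      obtain ⟨a, ha⟩ := hdcpo c ⟨y, hy⟩ hc.directedOn
      exact ⟨a, hdc c ⟨y, hy⟩ hc.directedOn hcC a ha, fun z hz => ha.1 hz⟩
    obtain ⟨m, hxm, hm⟩ := zorn_le_nonempty₀ C hchain x hx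
    exact ⟨m, hm, hxm⟩
  have hMC : M ⊆ C := fun x hx => hx.1
  have hMac : IsAntichain (· ≤ ·) M := by
    intro x hx y hy hxy hle
    exact hxy (le_antisymm hle (hx.2 hy.1 hle))
  obtain ⟨F, hFfin, hFac, hMF, hFmin⟩ := hctrl M hMac
  -- F ⊆ C
  have hFC : F ⊆ C := by
    intro f hf
    by_contra hfC
    obtain ⟨G, hGfin, hCG, hfG⟩ := hsep f hfC
    exact hfG (hFmin G hGfin (fun m hm => hCG (hMC hm)) hf)
  -- C ⊆ lowerCloSet F
  have hCF : C ⊆ lowerCloSet F := by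
    intro x hx
    obtain ⟨m, hmM, hxm⟩ := hmax x hx
    obtain ⟨f, hfF, hmf⟩ := hMF hmM
    exact ⟨f, hfF, hxm.trans hmf⟩
  -- closure F = lowerCloSet F
  have hclo : closure F = lowerCloSet F := by
    apply subset_antisymm
    · apply closure_minimal
      · exact fun x hx => ⟨x, hx, le_refl x⟩
      · rw [lowerCloSet_eq_lowerClosure]
        exact Topology.IsUpper.isClosed_lowerClosure hFfin
    · rintro x ⟨a, haF, hxa⟩
      have hx : x ∈ closure ({a} : Set L) := by
        rw [Topology.IsUpper.closure_singleton]
        exact hxa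
      exact closure_mono (Set.singleton_subset_iff.2 haF) hx
  refine ⟨F, hFfin, subset_antisymm ?_ ?_⟩
  · rw [hclo]; exact hCF
  · exact closure_minimal hFC hC
end
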